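/- arXiv:2108.04113 — 9 statements merged into one kernel-verified Lean document; each statement's English description precedes it below -/
import Mathlib

section
/- For all nonnegative integers m and n, the sum S(m,n) = \sum_{k=1}^{n} k^m F_k equals the m-th derivative with respect to y, evaluated at y = 0, of the real function y \mapsto (e^{y(n+2)} F_n + e^{y(n+1)} F_{n+1} - e^{y}) / (e^{2y} + e^{y} - 1). -/
/-- Fibonacci numbers over the integers, `F_{-n} = (-1)^{n-1} F_n`. -/
def fibZ (n : ℤ) : ℤ :=
  if 0 ≤ n then (Nat.fib n.toNat : ℤ)
  else (-1) ^ ((-n).toNat + 1) * (Nat.fib (-n).toNat : ℤ)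

lemma fibZ_natCast (k : ℕ) : fibZ (k : ℤ) = (Nat.fib k : ℤ) := by
  simp [fibZ]

lemma fib_poly_sum (x : ℝ) (n : ℕ) :
    ∑ k ∈ Finset.Icc 1 n, (Nat.fib k : ℝ) * (x ^ k * (x ^ 2 + x - 1)) =
      x ^ (n + 2) * Nat.fib n + x ^ (n + 1) * Nat.fib (n + 1) - x := by
  induction n with
  | zero => simp
  | succ n ih =>
    rw [Finset.sum_Icc_succ_top (by omega), ih, Nat.fib_add_two]
    push_cast
    ring

lemma sumExpDeriv (m n : ℕ) (c : ℕ → ℝ) :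
    iteratedDeriv m (fun y => ∑ k ∈ Finset.Icc 1 n, c k * Real.exp ((k : ℝ) * y)) =
      fun y => ∑ k ∈ Finset.Icc 1 n, c k * (k : ℝ) ^ m * Real.exp ((k : ℝ) * y) := by
  induction m with
  | zero => simp
  | succ m ih =>
    rw [iteratedDeriv_succ, ih]
    funext y
    have hd : ∀ k : ℕ, HasDerivAt (fun y : ℝ => c k * (k : ℝ) ^ m * Real.exp ((k : ℝ) * y))
        (c k * (k : ℝ) ^ m * (Real.exp ((k : ℝ) * y) * (k : ℝ))) y := by
      intro k
      have h1 : HasDerivAt (fun y : ℝ => (k : ℝ) * y) (k : ℝ) y := by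
        simpa using (hasDerivAt_id y).const_mul (k : ℝ)
      simpa using h1.exp.const_mul (c k * (k : ℝ) ^ m)
    rw [deriv_fun_sum (fun k _ => (hd k).differentiableAt)]
    refine Finset.sum_congr rfl fun k _ => ?_
    rw [(hd k).deriv]
    ring

theorem ledin_fib_derivative (m n : ℕ) :
    (∑ k ∈ Finset.Icc 1 n, (k : ℝ) ^ m * (fibZ k : ℝ)) =
      iteratedDeriv m (fun y : ℝ =>
        (Real.exp (y * (n + 2)) * (fibZ n : ℝ) + Real.exp (y * (n + 1)) * (fibZ (n + 1) : ℝ)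
            - Real.exp y) / (Real.exp (2 * y) + Real.exp y - 1)) 0 := by
  have hfg : (fun y : ℝ =>
        (Real.exp (y * (n + 2)) * (fibZ n : ℝ) + Real.exp (y * (n + 1)) * (fibZ (n + 1) : ℝ)
            - Real.exp y) / (Real.exp (2 * y) + Real.exp y - 1)) =ᶠ[nhds 0]
      (fun y => ∑ k ∈ Finset.Icc 1 n, (Nat.fib k : ℝ) * Real.exp ((k : ℝ) * y)) := by
    have hcont : Continuous fun y : ℝ => Real.exp (2 * y) + Real.exp y - 1 := by
      continuity
    have hne : ∀ᶠ y in nhds 0, Real.exp (2 * y) + Real.exp y - 1 ≠ 0 := by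
      apply hcont.continuousAt.eventually_ne
      norm_num
    filter_upwards [hne] with y hy
    rw [div_eq_iff hy]
    have key := fib_poly_sum (Real.exp y) n
    have hk : ∀ k : ℕ, Real.exp ((k : ℝ) * y) = Real.exp y ^ k := fun k => Real.exp_nat_mul y k
    have h2 : Real.exp (2 * y) = Real.exp y ^ 2 := by
      rw [← Real.exp_nat_mul]; norm_num
    have hn2 : Real.exp (y * (n + 2)) = Real.exp y ^ (n + 2) := by
      rw [mul_comm, ← hk (n + 2)]; push_cast; ring_nf
    have hn1 : Real.exp (y * (n + 1)) = Real.exp y ^ (n + 1) := by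
      rw [mul_comm, ← hk (n + 1)]; push_cast; ring_nf
    have hfz : ((fibZ ((n : ℤ) + 1) : ℝ)) = (Nat.fib (n + 1) : ℝ) := by
      have : ((n : ℤ) + 1) = ((n + 1 : ℕ) : ℤ) := by push_cast; ring
      rw [this, fibZ_natCast]; norm_num
    rw [Finset.sum_mul]
    symm
    calc ∑ k ∈ Finset.Icc 1 n, (Nat.fib k : ℝ) * Real.exp ((k : ℝ) * y) *
            (Real.exp (2 * y) + Real.exp y - 1)
        = ∑ k ∈ Finset.Icc 1 n, (Nat.fib k : ℝ) * (Real.exp y ^ k *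
            (Real.exp y ^ 2 + Real.exp y - 1)) := by
          refine Finset.sum_congr rfl fun k _ => ?_
          rw [hk, h2]; ring
      _ = Real.exp y ^ (n + 2) * Nat.fib n + Real.exp y ^ (n + 1) * Nat.fib (n + 1)
            - Real.exp y := key
      _ = Real.exp (y * (n + 2)) * (fibZ n : ℝ) + Real.exp (y * (n + 1)) * (fibZ ((n : ℤ) + 1) : ℝ)
            - Real.exp y := by rw [hn1, hn2, hfz, fibZ_natCast]; norm_num
  rw [hfg.iteratedDeriv_eq m, sumExpDeriv m n (fun k => (Nat.fib k : ℝ))]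
  refine Finset.sum_congr rfl fun k _ => ?_
  rw [fibZ_natCast]
  push_cast
  ring_nf
  simp
end

section
/- For all nonnegative integers m and n, the sum T(m,n) = \sum_{k=1}^{n} k^m L_k equals -2\delta_{m,0} plus the m-th derivative with respect to y, evaluated at y = 0, of the real function y \mapsto (e^{y(n+2)} L_n + e^{y(n+1)} L_{n+1} + e^{y} - 2) / (e^{2y} + e^{y} - 1), where \delta_{m,0} is the Kronecker delta. -/
/-- Lucas numbers over the integers, `L_{-n} = (-1)^n L_n`. -/
def lucasZ (n : ℤ) : ℤ := fibZ (n - 1) + fibZ (n + 1)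

lemma lucasZ_natCast (k : ℕ) : lucasZ (k : ℤ) = 2 * Nat.fib (k + 1) - Nat.fib k := by
  cases k with
  | zero => decide
  | succ k =>
    rw [show ((k + 1 : ℕ) : ℤ) = (k : ℤ) + 1 by push_cast; ring]
    unfold lucasZ
    rw [show (k : ℤ) + 1 - 1 = ((k : ℕ) : ℤ) by ring,
      show (k : ℤ) + 1 + 1 = ((k + 2 : ℕ) : ℤ) by push_cast; ring,
      fibZ_natCast, fibZ_natCast]
    have h := Nat.fib_add_two (n := k)
    have h' := Nat.fib_add_two (n := k - 1)
    push_cast [h]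
    ring

lemma lucas_rec (k : ℕ) : lucasZ ((k : ℤ) + 2) = lucasZ ((k : ℤ) + 1) + lucasZ (k : ℤ) := by
  have h2 : (k : ℤ) + 2 = ((k + 2 : ℕ) : ℤ) := by push_cast; ring
  have h1 : (k : ℤ) + 1 = ((k + 1 : ℕ) : ℤ) := by push_cast; ring
  rw [h1, h2, lucasZ_natCast, lucasZ_natCast, lucasZ_natCast]
  have ha := Nat.fib_add_two (n := k)
  have hb := Nat.fib_add_two (n := k + 1)
  push_cast [ha, hb]
  ring

lemma key_poly (n : ℕ) (X : ℝ) :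
    (lucasZ n : ℝ) * X ^ (n + 2) + (lucasZ ((n : ℤ) + 1) : ℝ) * X ^ (n + 1) + X - 2
      = (X ^ 2 + X - 1) * ((∑ k ∈ Finset.Icc 1 n, (lucasZ k : ℝ) * X ^ k) + 2) := by
  induction n with
  | zero =>
    have h0 : lucasZ 0 = 2 := by decide
    have h1 : lucasZ 1 = 1 := by decide
    simp only [Nat.cast_zero, zero_add, h0, h1]
    simp
    ring
  | succ n ih =>
    rw [Finset.sum_Icc_succ_top (by omega : 1 ≤ n + 1)]
    have hr : (lucasZ ((n : ℤ) + 2) : ℝ) = (lucasZ ((n : ℤ) + 1) : ℝ) + (lucasZ (n : ℤ) : ℝ) := by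
      rw [lucas_rec]; push_cast; ring
    push_cast
    rw [show (n : ℤ) + 1 + 1 = (n : ℤ) + 2 by ring, hr]
    linear_combination ih

lemma sum_exp_iteratedDeriv (s : Finset ℕ) :
    ∀ (m : ℕ) (c : ℕ → ℝ) (y : ℝ),
      iteratedDeriv m (fun y => ∑ k ∈ s, c k * Real.exp (k * y)) y
        = ∑ k ∈ s, c k * (k : ℝ) ^ m * Real.exp (k * y) := by
  intro m
  induction m with
  | zero =>
    intro c y
    simp
  | succ m ih =>
    intro c y
    rw [iteratedDeriv_succ']
    have hd : deriv (fun y => ∑ k ∈ s, c k * Real.exp (k * y))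
        = fun y => ∑ k ∈ s, (c k * (k : ℝ)) * Real.exp (k * y) := by
      funext z
      have : HasDerivAt (fun y => ∑ k ∈ s, c k * Real.exp (k * y))
          (∑ k ∈ s, (c k * (k : ℝ)) * Real.exp (k * z)) z := by
        apply HasDerivAt.fun_sum
        intro k _
        have h1 : HasDerivAt (fun y : ℝ => (k : ℝ) * y) (k : ℝ) z := by
          simpa using (hasDerivAt_id z).const_mul (k : ℝ)
        have h2 := (h1.exp).const_mul (c k)
        have h3 : c k * (Real.exp ((k : ℝ) * z) * (k : ℝ))
            = (c k * (k : ℝ)) * Real.exp ((k : ℝ) * z) := by ring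
        rwa [h3] at h2
      exact this.deriv
    rw [hd, ih (fun k => c k * (k : ℝ)) y]
    refine Finset.sum_congr rfl fun k _ => by ring

theorem ledin_lucas_derivative (m n : ℕ) :
    (∑ k ∈ Finset.Icc 1 n, (k : ℝ) ^ m * (lucasZ k : ℝ)) =
      -2 * (if m = 0 then (1 : ℝ) else 0) +
      iteratedDeriv m (fun y : ℝ =>
        (Real.exp (y * (n + 2)) * (lucasZ n : ℝ) + Real.exp (y * (n + 1)) * (lucasZ (n + 1) : ℝ)
            + Real.exp y - 2) / (Real.exp (2 * y) + Real.exp y - 1)) 0 := by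
  set c : ℕ → ℝ := fun k => if k = 0 then (2 : ℝ) else (lucasZ k : ℝ) with hc
  have h0notin : (0 : ℕ) ∉ Finset.Icc 1 n := by simp
  -- the fraction agrees with a finite exponential sum near 0
  have hfg : (fun y : ℝ =>
        (Real.exp (y * (n + 2)) * (lucasZ n : ℝ) + Real.exp (y * (n + 1)) * (lucasZ (n + 1) : ℝ)
            + Real.exp y - 2) / (Real.exp (2 * y) + Real.exp y - 1)) =ᶠ[nhds (0 : ℝ)]
      (fun y => ∑ k ∈ insert 0 (Finset.Icc 1 n), c k * Real.exp (k * y)) := by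
    have hcont : ContinuousAt (fun y : ℝ => Real.exp (2 * y) + Real.exp y - 1) 0 := by fun_prop
    have hne : (fun y : ℝ => Real.exp (2 * y) + Real.exp y - 1) 0 ≠ 0 := by
      simp [Real.exp_zero]
    have hev : ∀ᶠ y in nhds (0 : ℝ), Real.exp (2 * y) + Real.exp y - 1 ≠ 0 :=
      hcont.eventually_ne hne
    filter_upwards [hev] with y hy
    set X := Real.exp y with hX
    have e1 : Real.exp (y * ((n : ℝ) + 2)) = X ^ (n + 2) := by
      rw [show y * ((n : ℝ) + 2) = ((n + 2 : ℕ) : ℝ) * y by push_cast; ring, Real.exp_nat_mul]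
    have e2 : Real.exp (y * ((n : ℝ) + 1)) = X ^ (n + 1) := by
      rw [show y * ((n : ℝ) + 1) = ((n + 1 : ℕ) : ℝ) * y by push_cast; ring, Real.exp_nat_mul]
    have e3 : Real.exp (2 * y) = X ^ 2 := by
      rw [show (2 : ℝ) * y = ((2 : ℕ) : ℝ) * y by norm_num, Real.exp_nat_mul]
    have hden : X ^ 2 + X - 1 ≠ 0 := by rw [← e3]; exact hy
    rw [e1, e2, e3, div_eq_iff hden]
    rw [Finset.sum_insert h0notin]
    have hsum : ∀ k ∈ Finset.Icc 1 n, c k * Real.exp ((k : ℝ) * y) = (lucasZ k : ℝ) * X ^ k := by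
      intro k hk
      have hk0 : k ≠ 0 := by simp at hk; omega
      rw [hc]
      simp only [hk0, if_false]
      rw [Real.exp_nat_mul]
    rw [Finset.sum_congr rfl hsum]
    simp only [hc, if_pos rfl, Nat.cast_zero, zero_mul, Real.exp_zero, mul_one]
    have hkey := key_poly n X
    have heq : ((lucasZ ((n : ℤ) + 1) : ℤ) : ℝ) = ((lucasZ ((n + 1 : ℕ) : ℤ) : ℤ) : ℝ) := by
      norm_cast
    rw [heq] at hkey ⊢
    linear_combination hkey
  rw [Filter.EventuallyEq.iteratedDeriv_eq m hfg,
    sum_exp_iteratedDeriv (insert 0 (Finset.Icc 1 n)) m c 0,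
    Finset.sum_insert h0notin]
  have hz : c 0 * ((0 : ℕ) : ℝ) ^ m * Real.exp (((0 : ℕ) : ℝ) * 0) = if m = 0 then (2 : ℝ) else 0 := by
    cases m with
    | zero => simp [hc]
    | succ m => simp [hc]
  rw [hz]
  have hsum2 : ∀ k ∈ Finset.Icc 1 n,
      c k * (k : ℝ) ^ m * Real.exp ((k : ℝ) * 0) = (k : ℝ) ^ m * (lucasZ k : ℝ) := by
    intro k hk
    have hk0 : k ≠ 0 := by simp at hk; omega
    simp [hc, hk0, Real.exp_zero]
    ring
  rw [Finset.sum_congr rfl hsum2]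
  cases m with
  | zero => simp
  | succ m => simp
end

section
/- Let P1, P2 : \mathbb{N} \times \mathbb{N} \to \mathbb{Z} and C : \mathbb{N} \to \mathbb{Z} satisfy, for all nonnegative integers m and n: P1(m,n) = (n+2)^m - \sum_{j=0}^{m-1} \binom{m}{j} (2^{m-j} + 1) P1(j,n), P2(m,n) = (n+1)^m - \sum_{j=0}^{m-1} \binom{m}{j} (2^{m-j} + 1) P2(j,n), and C(m) = -1 - \sum_{j=0}^{m-1} \binom{m}{j} (2^{m-j} + 1) C(j) (empty sums when m = 0). Then for all nonnegative integers m and n: \sum_{k=1}^{n} k^m F_k = P1(m,n) F_n + P2(m,n) F_{n+1} + C(m). -/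
lemma fibZ_nat (k : ℕ) : fibZ k = (Nat.fib k : ℤ) := by
  simp [fibZ]

lemma key_binom (x : ℤ) (m : ℕ) :
    ∑ j ∈ Finset.range (m + 1), (m.choose j : ℤ) * (2 ^ (m - j) + 1) * x ^ j
      = (x + 2) ^ m + (x + 1) ^ m := by
  have h1 : (x + 2) ^ m = ∑ j ∈ Finset.range (m + 1),
      x ^ j * 2 ^ (m - j) * (m.choose j : ℤ) := add_pow x 2 m
  have h2 : (x + 1) ^ m = ∑ j ∈ Finset.range (m + 1),
      x ^ j * 1 ^ (m - j) * (m.choose j : ℤ) := add_pow x 1 m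
  rw [h1, h2, ← Finset.sum_add_distrib]
  apply Finset.sum_congr rfl
  intro j _
  ring

theorem ledin_fib_recursive (P1 P2 : ℕ → ℕ → ℤ) (C : ℕ → ℤ)
    (hP1 : ∀ m n : ℕ, P1 m n =
      ((n : ℤ) + 2) ^ m - ∑ j ∈ Finset.range m, (m.choose j : ℤ) * (2 ^ (m - j) + 1) * P1 j n)
    (hP2 : ∀ m n : ℕ, P2 m n =
      ((n : ℤ) + 1) ^ m - ∑ j ∈ Finset.range m, (m.choose j : ℤ) * (2 ^ (m - j) + 1) * P2 j n)
    (hC : ∀ m : ℕ, C m =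
      -1 - ∑ j ∈ Finset.range m, (m.choose j : ℤ) * (2 ^ (m - j) + 1) * C j) :
    ∀ m n : ℕ, (∑ k ∈ Finset.Icc 1 n, (k : ℤ) ^ m * fibZ k) =
      P1 m n * fibZ n + P2 m n * fibZ (n + 1) + C m := by
  -- Lemma A
  have lemA : ∀ m n : ℕ, P2 m (n + 1) = P1 m n := by
    intro m
    induction m using Nat.strong_induction_on with
    | _ m ih =>
      intro n
      rw [hP2, hP1]
      have : ((n + 1 : ℕ) : ℤ) + 1 = (n : ℤ) + 2 := by push_cast; ring
      rw [this]
      congr 1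
      apply Finset.sum_congr rfl
      intro j hj
      rw [ih j (Finset.mem_range.mp hj)]
  -- Lemma B
  have lemB : ∀ m n : ℕ, P1 m (n + 1) + P2 m (n + 1) - P2 m n = ((n : ℤ) + 1) ^ m := by
    intro m
    induction m using Nat.strong_induction_on with
    | _ m ih =>
      intro n
      rw [hP1 m (n + 1), hP2 m (n + 1), hP2 m n]
      have hsum : ∑ j ∈ Finset.range m, (m.choose j : ℤ) * (2 ^ (m - j) + 1) * P1 j (n + 1)
          + ∑ j ∈ Finset.range m, (m.choose j : ℤ) * (2 ^ (m - j) + 1) * P2 j (n + 1)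
          - ∑ j ∈ Finset.range m, (m.choose j : ℤ) * (2 ^ (m - j) + 1) * P2 j n
          = ∑ j ∈ Finset.range m, (m.choose j : ℤ) * (2 ^ (m - j) + 1) * ((n : ℤ) + 1) ^ j := by
        rw [← Finset.sum_add_distrib, ← Finset.sum_sub_distrib]
        apply Finset.sum_congr rfl
        intro j hj
        rw [← ih j (Finset.mem_range.mp hj) n]
        ring
      have hkey := key_binom ((n : ℤ) + 1) m
      rw [Finset.sum_range_succ] at hkey
      have hlast : (m.choose m : ℤ) * (2 ^ (m - m) + 1) * ((n : ℤ) + 1) ^ m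
          = 2 * ((n : ℤ) + 1) ^ m := by
        rw [Nat.choose_self, Nat.sub_self]; push_cast; ring
      have hpc1 : ((n + 1 : ℕ) : ℤ) + 2 = (n : ℤ) + 1 + 2 := by push_cast; ring
      have hpc2 : ((n + 1 : ℕ) : ℤ) + 1 = (n : ℤ) + 1 + 1 := by push_cast; ring
      rw [hpc1, hpc2]
      rw [hlast] at hkey
      linarith [hsum, hkey]
  -- Lemma C
  have lemC : ∀ m : ℕ, P2 m 0 + C m = 0 := by
    intro m
    induction m using Nat.strong_induction_on with
    | _ m ih =>
      rw [hP2, hC]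
      have hsum : ∑ j ∈ Finset.range m, (m.choose j : ℤ) * (2 ^ (m - j) + 1) * P2 j 0
          + ∑ j ∈ Finset.range m, (m.choose j : ℤ) * (2 ^ (m - j) + 1) * C j = 0 := by
        rw [← Finset.sum_add_distrib]
        apply Finset.sum_eq_zero
        intro j hj
        have h0 := ih j (Finset.mem_range.mp hj)
        have : (m.choose j : ℤ) * (2 ^ (m - j) + 1) * P2 j 0
            + (m.choose j : ℤ) * (2 ^ (m - j) + 1) * C j
            = (m.choose j : ℤ) * (2 ^ (m - j) + 1) * (P2 j 0 + C j) := by ring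
        rw [this, h0, mul_zero]
      push_cast
      simp only [one_pow]
      linarith [hsum]
  intro m n
  induction n with
  | zero =>
      simp only [Finset.Icc_eq_empty_of_lt (by norm_num : (1:ℕ) > 0), Finset.sum_empty]
      have h0 : fibZ ((0 : ℕ) : ℤ) = 0 := by simp [fibZ]
      have h1 : fibZ (((0 : ℕ) : ℤ) + 1) = 1 := by norm_num [fibZ]
      rw [h0, h1]
      have := lemC m
      linarith
  | succ n ihn =>
      rw [Finset.sum_Icc_succ_top (by omega : 1 ≤ n + 1), ihn]
      have hfin : fibZ ((n : ℤ) + 1 + 1) = fibZ ((n : ℤ) + 1) + fibZ (n : ℤ) := by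
        have e1 : ((n : ℤ) + 1 + 1) = ((n + 2 : ℕ) : ℤ) := by push_cast; ring
        have e2 : ((n : ℤ) + 1) = ((n + 1 : ℕ) : ℤ) := by push_cast; ring
        rw [e1, e2, fibZ_nat, fibZ_nat, fibZ_nat]
        have : Nat.fib (n + 2) = Nat.fib (n + 1) + Nat.fib n := by
          rw [Nat.fib_add_two]; ring
        rw [this]; push_cast; ring
      have hA := lemA m n
      have hB := lemB m n
      have e3 : ((n + 1 : ℕ) : ℤ) = (n : ℤ) + 1 := by push_cast; ring
      rw [e3, hfin, hA]
      have h1 : P1 m (n + 1) = P2 m n + ((n : ℤ) + 1) ^ m - P1 m n := by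
        rw [← hA]; linarith [hB]
      rw [h1]; ring
end

section
/- For every nonnegative integer j and every integer s: \alpha^s A_j(\alpha) - \beta^s A_j(\beta) = \sqrt{5} \sum_{t=0}^{j} A(j,t) F_{t+s}, where \alpha^s and \beta^s denote integer powers (\beta \neq 0, so negative powers are defined). -/
/-- The Eulerian numbers `A(i,j) = ∑_{t=0}^{j} (-1)^t C(i+1,t) (j-t)^i`. -/
def eulerianA (i j : ℕ) : ℤ :=
  ∑ t ∈ Finset.range (j + 1), (-1 : ℤ) ^ t * (Nat.choose (i + 1) t) * ((j - t : ℕ) ^ i : ℤ)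

/-- The Eulerian polynomial `A_i(x) = ∑_{j=0}^{i} A(i,j) x^j` over the reals. -/
noncomputable def eulerianPoly (i : ℕ) (x : ℝ) : ℝ :=
  ∑ j ∈ Finset.range (i + 1), (eulerianA i j : ℝ) * x ^ j

open Real in
lemma binetZ (n : ℤ) : goldenRatio ^ n - goldenConj ^ n = Real.sqrt 5 * fibZ n := by
  rcases le_or_gt 0 n with h | h
  · lift n to ℕ using h
    rw [fibZ, if_pos (by positivity), zpow_natCast, zpow_natCast, Int.toNat_natCast]
    push_cast
    rw [Real.coe_fib_eq]
    field_simp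
  · obtain ⟨m, rfl⟩ : ∃ m : ℕ, n = -(m : ℤ) := ⟨(-n).toNat, by omega⟩
    rw [fibZ, if_neg (by omega)]
    have h1 : goldenRatio ^ (-(m : ℤ)) = (-goldenConj) ^ (m : ℕ) := by
      rw [zpow_neg, zpow_natCast, ← inv_pow, inv_goldenRatio]
    have h2 : goldenConj ^ (-(m : ℤ)) = (-goldenRatio) ^ (m : ℕ) := by
      rw [zpow_neg, zpow_natCast, ← inv_pow, inv_goldenConj]
    have hb : (goldenRatio : ℝ) ^ m - goldenConj ^ m = Real.sqrt 5 * Nat.fib m := by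
      rw [Real.coe_fib_eq]; field_simp
    have hmt : (-(-(m : ℤ))).toNat = m := by omega
    have key : (-goldenConj) ^ m - (-goldenRatio) ^ m
        = (-1 : ℝ) ^ (m + 1) * (goldenRatio ^ m - goldenConj ^ m) := by
      rw [neg_pow goldenConj, neg_pow goldenRatio]; ring
    rw [h1, h2, hmt, key, hb]
    push_cast
    ring

theorem eulerian_poly_fib_identity (j : ℕ) (s : ℤ) :
    ((1 + Real.sqrt 5) / 2) ^ s * eulerianPoly j ((1 + Real.sqrt 5) / 2)
      - ((1 - Real.sqrt 5) / 2) ^ s * eulerianPoly j ((1 - Real.sqrt 5) / 2) =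
      Real.sqrt 5 * ∑ t ∈ Finset.range (j + 1), (eulerianA j t : ℝ) * (fibZ (t + s) : ℝ) := by
  have hφ : ((1 + Real.sqrt 5) / 2 : ℝ) = Real.goldenRatio := rfl
  have hψ : ((1 - Real.sqrt 5) / 2 : ℝ) = Real.goldenConj := rfl
  rw [hφ, hψ, eulerianPoly, eulerianPoly, Finset.mul_sum, Finset.mul_sum, Finset.mul_sum,
    ← Finset.sum_sub_distrib]
  refine Finset.sum_congr rfl fun t _ => ?_
  have h1 : Real.goldenRatio ^ s * ((eulerianA j t : ℝ) * Real.goldenRatio ^ t)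
      = (eulerianA j t : ℝ) * Real.goldenRatio ^ ((t : ℤ) + s) := by
    rw [zpow_add₀ Real.goldenRatio_ne_zero, zpow_natCast]; ring
  have h2 : Real.goldenConj ^ s * ((eulerianA j t : ℝ) * Real.goldenConj ^ t)
      = (eulerianA j t : ℝ) * Real.goldenConj ^ ((t : ℤ) + s) := by
    rw [zpow_add₀ Real.goldenConj_ne_zero, zpow_natCast]; ring
  rw [h1, h2, ← mul_sub, binetZ]
  ring
end

section
/- For all nonnegative integers m, n and every integer r: \sum_{k=1}^{n} k^m F_{k+r} = -\delta_{m,0} F_r + n^m F_{n+r+2} + (-1)^{m+1} \sum_{j=0}^{m} A(m,j) F_{j+m+r+1} - \sum_{s=1}^{m} (-1)^{s+1} \binom{m}{s} n^{m-s} \sum_{j=1}^{s} A(s,j) F_{j+n+s+r+1}, where \delta_{m,0} is the Kronecker delta. -/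
open Finset

/-- `∑_l (-1)^l C(q,l) l^s`. -/
def SL (s q : ℕ) : ℤ := ∑ l ∈ Finset.range (q + 1), (-1 : ℤ) ^ l * (q.choose l : ℤ) * (l : ℤ) ^ s

/-- Surjection numbers `k! S(t,k)` via explicit formula. -/
def surZ (t p : ℕ) : ℤ := (-1) ^ p * SL t p

lemma SL_succ (t p : ℕ) :
    SL t (p + 1) = SL t p - ∑ l ∈ Finset.range (p + 1),
      (-1 : ℤ) ^ l * (p.choose l : ℤ) * ((l : ℤ) + 1) ^ t := by
  have hX : ∑ l ∈ range (p + 1), (-1 : ℤ) ^ (l+1) * (p.choose (l+1) : ℤ) * ((l:ℤ) + 1) ^ t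
      = SL t p - ((0:ℤ)) ^ t := by
    have h := sum_range_succ' (fun l => (-1 : ℤ) ^ l * (p.choose l : ℤ) * (l : ℤ) ^ t) (p + 1)
    rw [SL] at *
    rw [sum_range_succ] at h
    simp only [Nat.choose_succ_self, Nat.cast_zero, Nat.choose_zero_right, Nat.cast_one] at h
    push_cast at h ⊢
    rw [show ((-1:ℤ)^(p+1) * 0 * ((p:ℤ)+1)^t) = 0 by ring] at h
    linarith [h]
  rw [SL, sum_range_succ']
  have e1 : ∀ l ∈ range (p + 1),
      (-1 : ℤ) ^ (l+1) * (((p+1).choose (l+1)) : ℤ) * ((l+1 : ℕ) : ℤ) ^ t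
      = -((-1:ℤ)^l * (p.choose l : ℤ) * ((l:ℤ)+1)^t)
        + (-1:ℤ)^(l+1) * (p.choose (l+1) : ℤ) * ((l:ℤ)+1)^t := by
    intro l _
    rw [Nat.choose_succ_succ']
    push_cast
    ring
  rw [sum_congr rfl e1, sum_add_distrib, hX, sum_neg_distrib]
  simp only [Nat.choose_zero_right, Nat.cast_one, Nat.cast_zero]
  ring

lemma surZ_succ (t p : ℕ) :
    surZ t (p + 1) = ∑ s ∈ Finset.range t, (t.choose s : ℤ) * surZ s p := by
  have hlt : ∀ l : ℕ, ((l : ℤ) + 1) ^ t = (∑ s ∈ range t, (t.choose s : ℤ) * (l : ℤ) ^ s) + (l:ℤ)^t := by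
    intro l
    have h := add_pow (l : ℤ) 1 t
    simp only [one_pow, mul_one] at h
    rw [h, sum_range_succ, Nat.choose_self, Nat.cast_one, mul_one]
    exact congrArg (· + (l:ℤ)^t) (sum_congr rfl fun s _ => mul_comm _ _)
  calc surZ t (p+1) = (-1:ℤ)^(p+1) * (SL t p - ∑ l ∈ range (p + 1),
        (-1 : ℤ) ^ l * (p.choose l : ℤ) * ((l : ℤ) + 1) ^ t) := by rw [surZ, SL_succ]
    _ = (-1:ℤ)^p * (∑ l ∈ range (p + 1),
        (-1 : ℤ) ^ l * (p.choose l : ℤ) * ((l : ℤ) + 1) ^ t - SL t p) := by ring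
    _ = (-1:ℤ)^p * (∑ l ∈ range (p + 1), (-1 : ℤ) ^ l * (p.choose l : ℤ) *
          ((∑ s ∈ range t, (t.choose s : ℤ) * (l : ℤ) ^ s) + (l:ℤ)^t) - SL t p) := by
        rw [sum_congr rfl fun l _ => by rw [hlt l]]
    _ = (-1:ℤ)^p * (∑ l ∈ range (p + 1), (-1 : ℤ) ^ l * (p.choose l : ℤ) *
          (∑ s ∈ range t, (t.choose s : ℤ) * (l : ℤ) ^ s)) := by
        rw [SL, sum_congr rfl (fun l _ => mul_add ((-1 : ℤ) ^ l * (p.choose l : ℤ)) _ _),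
          sum_add_distrib]
        ring
    _ = ∑ l ∈ range (p + 1), ∑ s ∈ range t, (t.choose s : ℤ) *
          ((-1:ℤ)^p * ((-1 : ℤ) ^ l * (p.choose l : ℤ) * (l : ℤ) ^ s)) := by
        simp only [Finset.mul_sum]
        refine sum_congr rfl fun l _ => ?_
        refine sum_congr rfl fun s _ => ?_
        ring
    _ = ∑ s ∈ range t, ∑ l ∈ range (p + 1), (t.choose s : ℤ) *
          ((-1:ℤ)^p * ((-1 : ℤ) ^ l * (p.choose l : ℤ) * (l : ℤ) ^ s)) := sum_comm
    _ = ∑ s ∈ range t, (t.choose s : ℤ) * surZ s p := by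
        refine sum_congr rfl fun s _ => ?_
        rw [surZ, SL, mul_sum, ← mul_sum]

lemma surZ_eq_zero : ∀ t p : ℕ, t < p → surZ t p = 0 := by
  intro t
  induction t using Nat.strong_induction_on with
  | _ t IH =>
    intro p hp
    obtain ⟨q, rfl⟩ : ∃ q, p = q + 1 := ⟨p - 1, by omega⟩
    rw [surZ_succ]
    refine Finset.sum_eq_zero fun s hs => ?_
    rw [Finset.mem_range] at hs
    rw [IH s hs q (by omega), mul_zero]

lemma choose_tri (n u p : ℕ) :
    n.choose u * (n - u).choose p = n.choose p * (n - p).choose u := by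
  rcases le_or_gt (u + p) n with h | h
  · have h1 := Nat.choose_mul (n := n) (Nat.le_add_right u p)
    have h2 := Nat.choose_mul (n := n) (Nat.le_add_left p u)
    rw [Nat.add_sub_cancel_left] at h1
    rw [Nat.add_sub_cancel] at h2
    rw [← h1, ← h2, Nat.choose_symm_add]
  · rcases le_or_gt u n with hu | hu
    · rcases le_or_gt p n with hp | hp
      · rw [Nat.choose_eq_zero_of_lt (show n - u < p by omega),
          Nat.choose_eq_zero_of_lt (show n - p < u by omega), mul_zero, mul_zero]
      · rw [Nat.choose_eq_zero_of_lt (show n - u < p by omega),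
          Nat.choose_eq_zero_of_lt hp, mul_zero, zero_mul]
    · rcases le_or_gt p n with hp | hp
      · rw [Nat.choose_eq_zero_of_lt hu,
          Nat.choose_eq_zero_of_lt (show n - p < u by omega), zero_mul, mul_zero]
      · rw [Nat.choose_eq_zero_of_lt hu, Nat.choose_eq_zero_of_lt hp, zero_mul, zero_mul]

lemma pow_eq_sum_surZ (t k : ℕ) :
    (k : ℤ) ^ t = ∑ i ∈ Finset.range (k + 1), (k.choose i : ℤ) * surZ t i := by
  have inner : ∀ l, l ∈ range (k+1) →
      (∑ i ∈ range (k + 1), (-1:ℤ)^i * (k.choose i : ℤ) * (i.choose l : ℤ))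
        = (-1:ℤ)^l * (k.choose l : ℤ) * (if k - l = 0 then 1 else 0) := by
    intro l hl
    rw [mem_range] at hl
    have hlk : l ≤ k := by omega
    rw [range_eq_Ico, ← Finset.sum_Ico_consecutive _ (Nat.zero_le l) (by omega : l ≤ k + 1)]
    have first : ∑ i ∈ Ico 0 l, (-1:ℤ)^i * (k.choose i : ℤ) * (i.choose l : ℤ) = 0 := by
      refine Finset.sum_eq_zero fun i hi => ?_
      rw [mem_Ico] at hi
      rw [Nat.choose_eq_zero_of_lt hi.2, Nat.cast_zero, mul_zero]
    rw [first, zero_add, Finset.sum_Ico_eq_sum_range]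
    have step : ∀ d ∈ range (k + 1 - l), (-1:ℤ)^(l+d) * (k.choose (l+d) : ℤ) * ((l+d).choose l : ℤ)
        = ((-1:ℤ)^l * (k.choose l : ℤ)) * ((-1:ℤ)^d * ((k-l).choose d : ℤ)) := by
      intro d hd
      rw [mem_range] at hd
      have hmul : k.choose (l+d) * (l+d).choose l = k.choose l * (k-l).choose d := by
        have := Nat.choose_mul (n := k) (Nat.le_add_right l d)
        rwa [Nat.add_sub_cancel_left] at this
      have : ((k.choose (l+d) : ℤ)) * ((l+d).choose l : ℤ) = (k.choose l : ℤ) * ((k-l).choose d : ℤ) := by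
        exact_mod_cast congrArg (Nat.cast : ℕ → ℤ) hmul
      rw [pow_add]
      linear_combination ((-1:ℤ)^l * (-1:ℤ)^d) * this
    rw [sum_congr rfl step, ← Finset.mul_sum]
    congr 1
    rw [show k + 1 - l = (k - l) + 1 by omega]
    exact Int.alternating_sum_range_choose
  calc (k:ℤ)^t = ∑ l ∈ range (k+1), ((-1:ℤ)^l * (l:ℤ)^t) *
        ((-1:ℤ)^l * (k.choose l : ℤ) * (if k - l = 0 then 1 else 0)) := by
        rw [Finset.sum_eq_single k]
        · simp [Nat.sub_self]
          rcases Nat.even_or_odd k with he | ho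
          · rw [he.neg_one_pow]; ring
          · rw [ho.neg_one_pow]; ring
        · intro l hl hlk
          rw [if_neg (by rw [mem_range] at hl; omega), mul_zero, mul_zero]
        · intro h; exact absurd (self_mem_range_succ k) h
    _ = ∑ l ∈ range (k+1), ((-1:ℤ)^l * (l:ℤ)^t) *
        (∑ i ∈ range (k + 1), (-1:ℤ)^i * (k.choose i : ℤ) * (i.choose l : ℤ)) := by
        refine sum_congr rfl fun l hl => ?_
        rw [inner l hl]
    _ = ∑ l ∈ range (k+1), ∑ i ∈ range (k + 1),
        ((-1:ℤ)^i * (k.choose i : ℤ) * (i.choose l : ℤ)) * ((-1:ℤ)^l * (l:ℤ)^t) := by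
        refine sum_congr rfl fun l _ => ?_
        rw [Finset.mul_sum]
        exact sum_congr rfl fun i _ => by ring
    _ = ∑ i ∈ range (k+1), ∑ l ∈ range (k + 1),
        ((-1:ℤ)^i * (k.choose i : ℤ) * (i.choose l : ℤ)) * ((-1:ℤ)^l * (l:ℤ)^t) := sum_comm
    _ = ∑ i ∈ range (k + 1), (k.choose i : ℤ) * surZ t i := by
        refine sum_congr rfl fun i hi => ?_
        rw [mem_range] at hi
        rw [surZ, SL]
        have ext : ∑ l ∈ range (i + 1), (-1:ℤ)^l * (i.choose l : ℤ) * (l:ℤ)^t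
            = ∑ l ∈ range (k + 1), (-1:ℤ)^l * (i.choose l : ℤ) * (l:ℤ)^t := by
          refine Finset.sum_subset (by simp [Finset.range_subset]; omega) fun l _ hl => ?_
          rw [mem_range, not_lt] at hl
          rw [Nat.choose_eq_zero_of_lt (by omega : i < l), Nat.cast_zero, mul_zero, zero_mul]
        rw [ext, Finset.mul_sum, Finset.mul_sum]
        exact sum_congr rfl fun l _ => by ring

lemma sum_tri_swap {M : Type*} [AddCommMonoid M] (N : ℕ) (f : ℕ → ℕ → M) :
    ∑ a ∈ Finset.range (N + 1), ∑ b ∈ Finset.range (N + 1 - a), f a b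
      = ∑ b ∈ Finset.range (N + 1), ∑ a ∈ Finset.range (N + 1 - b), f a b := by
  rw [Finset.sum_sigma', Finset.sum_sigma']
  refine Finset.sum_nbij' (fun x => ⟨x.2, x.1⟩) (fun x => ⟨x.2, x.1⟩) ?_ ?_
    (fun _ _ => rfl) (fun _ _ => rfl) (fun _ _ => rfl) <;>
  · simp only [Finset.mem_sigma, Finset.mem_range, Sigma.forall]
    intro a b h
    omega

lemma sum_tri_shift {M : Type*} [AddCommMonoid M] (N : ℕ) (g : ℕ → ℕ → M) :
    ∑ j ∈ Finset.range (N + 1), ∑ b ∈ Finset.range (j + 1), g j b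
      = ∑ b ∈ Finset.range (N + 1), ∑ a ∈ Finset.range (N + 1 - b), g (a + b) b := by
  rw [Finset.sum_sigma', Finset.sum_sigma']
  refine Finset.sum_nbij' (fun x => ⟨x.2, x.1 - x.2⟩) (fun x => ⟨x.2 + x.1, x.1⟩) ?_ ?_ ?_ ?_ ?_
  · simp only [Finset.mem_sigma, Finset.mem_range, Sigma.forall]
    intro a b h; omega
  · simp only [Finset.mem_sigma, Finset.mem_range, Sigma.forall]
    intro a b h; omega
  · simp only [Finset.mem_sigma, Finset.mem_range, Sigma.forall]
    intro a b h
    have e : a - b + b = a := by omega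
    rw [e]
  · simp only [Finset.mem_sigma, Finset.mem_range, Sigma.forall]
    intro a b h
    have e : b + a - a = b := by omega
    rw [e]
  · simp only [Finset.mem_sigma, Finset.mem_range, Sigma.forall]
    intro a b h
    congr 1
    omega

noncomputable def Qp (x : ℝ) (s : ℕ) : ℝ :=
  ∑ j ∈ Finset.range (s + 1), (eulerianA s j : ℝ) * x ^ (j + s)

noncomputable def Tsum (x : ℝ) (s p : ℕ) : ℝ :=
  ∑ u ∈ Finset.range (s + 1), ∑ i ∈ Finset.range (s + 1 - u),
    (-1 : ℝ) ^ u * ((s + 1).choose u : ℝ) * (i.choose p : ℝ) * x ^ (i + u + s)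

lemma W_eq_zero (s p : ℕ) (hp : p ≤ s) :
    ∑ v ∈ Finset.range (s + 2), (-1 : ℤ) ^ v * ((s + 1).choose v : ℤ) * ((s + 1 - v).choose p : ℤ)
      = 0 := by
  have tri : ∀ v, ((s + 1).choose v : ℤ) * ((s + 1 - v).choose p : ℤ)
      = ((s + 1).choose p : ℤ) * ((s + 1 - p).choose v : ℤ) := by
    intro v
    exact_mod_cast congrArg (Nat.cast : ℕ → ℤ) (choose_tri (s + 1) v p)
  calc ∑ v ∈ Finset.range (s + 2), (-1 : ℤ) ^ v * ((s + 1).choose v : ℤ) * ((s + 1 - v).choose p : ℤ)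
      = ((s + 1).choose p : ℤ) * ∑ v ∈ Finset.range (s + 2), (-1 : ℤ)^v * ((s + 1 - p).choose v : ℤ) := by
        rw [Finset.mul_sum]
        refine Finset.sum_congr rfl fun v _ => ?_
        rw [mul_assoc, tri v]
        ring
    _ = ((s + 1).choose p : ℤ) * ∑ v ∈ Finset.range ((s + 1 - p) + 1), (-1 : ℤ)^v * ((s + 1 - p).choose v : ℤ) := by
        congr 1
        refine (Finset.sum_subset (by rw [Finset.range_subset_range]; omega) fun v _ hv => ?_).symm
        rw [Finset.mem_range, not_lt] at hv
        rw [Nat.choose_eq_zero_of_lt (by omega), Nat.cast_zero, mul_zero]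
    _ = 0 := by
        rw [Int.alternating_sum_range_choose_of_ne (by omega), mul_zero]

lemma Tsum_diag (x : ℝ) (s : ℕ) : Tsum x s s = x ^ (2 * s) := by
  rw [Tsum]
  rw [Finset.sum_eq_single_of_mem 0 (Finset.mem_range.mpr (by omega))]
  · rw [Nat.sub_zero, Finset.sum_eq_single_of_mem s (Finset.mem_range.mpr (by omega))]
    · simp only [pow_zero, Nat.choose_zero_right, Nat.cast_one, Nat.choose_self, one_mul, mul_one]
      rw [show s + 0 + s = 2 * s by omega]
    · intro i hi his
      rw [Finset.mem_range] at hi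
      rw [Nat.choose_eq_zero_of_lt (by omega : i < s), Nat.cast_zero, mul_zero, zero_mul]
  · intro u hu hu0
    refine Finset.sum_eq_zero fun i hi => ?_
    rw [Finset.mem_range] at hu hi
    rw [Nat.choose_eq_zero_of_lt (by omega : i < s), Nat.cast_zero, mul_zero, zero_mul]

lemma Tsum_step (x : ℝ) (hx : x ^ 2 = x + 1) (s p : ℕ) (hp : p ≤ s) :
    Tsum x (s + 1) p = -Tsum x s p := by
  have hWr : ∑ v ∈ Finset.range (s + 2), (-1 : ℝ) ^ v * ((s + 1).choose v : ℝ) * ((s + 1 - v).choose p : ℝ)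
      = 0 := by
    have h0 := W_eq_zero s p hp
    have : ((∑ v ∈ Finset.range (s + 2), (-1 : ℤ) ^ v * ((s + 1).choose v : ℤ) * ((s + 1 - v).choose p : ℤ) : ℤ) : ℝ) = 0 := by
      rw [h0]; norm_num
    push_cast at this
    exact this
  have h1 : Tsum x (s + 1) p
      = (∑ u ∈ Finset.range (s + 1), ∑ i ∈ Finset.range (s + 1 - u),
          (-1 : ℝ) ^ (u + 1) * ((s + 1).choose u : ℝ) * (i.choose p : ℝ) * x ^ (i + u + s + 2))
        + (∑ u ∈ Finset.range (s + 1), ∑ i ∈ Finset.range (s + 1 - u),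
          (-1 : ℝ) ^ (u + 1) * ((s + 1).choose (u + 1) : ℝ) * (i.choose p : ℝ) * x ^ (i + u + s + 2))
        + ∑ i ∈ Finset.range (s + 2), (i.choose p : ℝ) * x ^ (i + s + 1) := by
    rw [Tsum, Finset.sum_range_succ']
    congr 1
    · rw [← Finset.sum_add_distrib]
      refine Finset.sum_congr rfl fun u _ => ?_
      rw [← Finset.sum_add_distrib]
      refine Finset.sum_congr (by congr 1; omega) fun i _ => ?_
      rw [Nat.choose_succ_succ (s + 1) u]
      push_cast
      ring
    · refine Finset.sum_congr (by congr 1) fun i _ => ?_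
      simp only [pow_zero, Nat.choose_zero_right, Nat.cast_one, one_mul]
      ring
  have h3 : (∑ v ∈ Finset.range (s + 2), ∑ i ∈ Finset.range (s + 2 - v),
        (-1 : ℝ) ^ v * ((s + 1).choose v : ℝ) * (i.choose p : ℝ) * x ^ (i + v + s + 1))
      = (∑ u ∈ Finset.range (s + 1), ∑ i ∈ Finset.range (s + 1 - u),
          (-1 : ℝ) ^ (u + 1) * ((s + 1).choose (u + 1) : ℝ) * (i.choose p : ℝ) * x ^ (i + u + s + 2))
        + ∑ i ∈ Finset.range (s + 2), (i.choose p : ℝ) * x ^ (i + s + 1) := by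
    rw [Finset.sum_range_succ']
    congr 1
    · refine Finset.sum_congr rfl fun u _ => ?_
      refine Finset.sum_congr (by congr 1; omega) fun i _ => ?_
      push_cast
      ring
    · refine Finset.sum_congr (by norm_num) fun i _ => ?_
      simp only [pow_zero, Nat.choose_zero_right, Nat.cast_one, one_mul]
      ring
  have hMain : (∑ v ∈ Finset.range (s + 1), ∑ i ∈ Finset.range (s + 1 - v),
        (-1 : ℝ) ^ v * ((s + 1).choose v : ℝ) * (i.choose p : ℝ) * x ^ (i + v + s + 1))
      = x * Tsum x s p := by
    rw [Tsum, Finset.mul_sum]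
    refine Finset.sum_congr rfl fun v _ => ?_
    rw [Finset.mul_sum]
    refine Finset.sum_congr rfl fun i _ => ?_
    ring
  have hW2 : (∑ i ∈ Finset.range (s + 2 - (s + 1)),
        (-1 : ℝ) ^ (s + 1) * ((s + 1).choose (s + 1) : ℝ) * (i.choose p : ℝ) * x ^ (i + (s + 1) + s + 1))
      + (∑ v ∈ Finset.range (s + 1),
        (-1 : ℝ) ^ v * ((s + 1).choose v : ℝ) * ((s + 1 - v).choose p : ℝ) * x ^ (2 * s + 2))
      = 0 := by
    have h := congrArg (fun z : ℝ => z * x ^ (2 * s + 2)) hWr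
    simp only [Finset.sum_mul, zero_mul] at h
    rw [Finset.sum_range_succ, Nat.sub_self] at h
    rw [show s + 2 - (s + 1) = 1 by omega, Finset.sum_range_one,
      show (0 : ℕ) + (s + 1) + s + 1 = 2 * s + 2 by omega]
    linarith [h]
  have h4 : (∑ v ∈ Finset.range (s + 2), ∑ i ∈ Finset.range (s + 2 - v),
        (-1 : ℝ) ^ v * ((s + 1).choose v : ℝ) * (i.choose p : ℝ) * x ^ (i + v + s + 1))
      = x * Tsum x s p := by
    rw [Finset.sum_range_succ]
    have inner : ∀ v ∈ Finset.range (s + 1),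
        (∑ i ∈ Finset.range (s + 2 - v),
          (-1 : ℝ) ^ v * ((s + 1).choose v : ℝ) * (i.choose p : ℝ) * x ^ (i + v + s + 1))
        = (∑ i ∈ Finset.range (s + 1 - v),
            (-1 : ℝ) ^ v * ((s + 1).choose v : ℝ) * (i.choose p : ℝ) * x ^ (i + v + s + 1))
          + (-1 : ℝ) ^ v * ((s + 1).choose v : ℝ) * (((s + 1 - v).choose p : ℝ)) * x ^ (2 * s + 2) := by
      intro v hv
      rw [Finset.mem_range] at hv
      rw [show s + 2 - v = (s + 1 - v) + 1 by omega, Finset.sum_range_succ]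
      congr 2
      rw [show s + 1 - v + v + s + 1 = 2 * s + 2 by omega]
    rw [Finset.sum_congr rfl inner, Finset.sum_add_distrib]
    linarith [hMain, hW2]
  have h2 : (∑ u ∈ Finset.range (s + 1), ∑ i ∈ Finset.range (s + 1 - u),
      (-1 : ℝ) ^ (u + 1) * ((s + 1).choose u : ℝ) * (i.choose p : ℝ) * x ^ (i + u + s + 2))
      = -(x ^ 2) * Tsum x s p := by
    rw [Tsum, Finset.mul_sum]
    refine Finset.sum_congr rfl fun u _ => ?_
    rw [Finset.mul_sum]
    refine Finset.sum_congr rfl fun i _ => ?_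
    ring
  rw [h1, add_assoc, ← h3, h4, h2]
  linear_combination (-(Tsum x s p)) * hx
lemma Tsum_eq (x : ℝ) (hx : x ^ 2 = x + 1) :
    ∀ s p : ℕ, p ≤ s → Tsum x s p = (-1 : ℝ) ^ s * (-1 : ℝ) ^ p * x ^ (2 * p) := by
  intro s
  induction s with
  | zero =>
    intro p hp
    interval_cases p
    simp [Tsum_diag x 0]
  | succ s IH =>
    intro p hp
    rcases eq_or_lt_of_le hp with rfl | hlt
    · rw [Tsum_diag]
      rw [← mul_pow]
      norm_num
    · have hps : p ≤ s := by omega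
      rw [Tsum_step x hx s p hps, IH p hps]
      ring

lemma eulerianA_cast (x : ℝ) (s j : ℕ) :
    (eulerianA s j : ℝ) * x ^ (j + s)
      = ∑ t ∈ Finset.range (j + 1),
          (-1 : ℝ) ^ t * ((s + 1).choose t : ℝ) * ((j - t : ℕ) : ℝ) ^ s * x ^ (j + s) := by
  rw [eulerianA]
  push_cast
  rw [Finset.sum_mul]

lemma Qp_eq (x : ℝ) (hx : x ^ 2 = x + 1) (s : ℕ) :
    Qp x s = ∑ p ∈ Finset.range (s + 1),
      (surZ s p : ℝ) * ((-1 : ℝ) ^ s * (-1 : ℝ) ^ p * x ^ (2 * p)) := by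
  calc Qp x s = ∑ j ∈ Finset.range (s + 1), ∑ t ∈ Finset.range (j + 1),
        (-1 : ℝ) ^ t * ((s + 1).choose t : ℝ) * ((j - t : ℕ) : ℝ) ^ s * x ^ (j + s) := by
        rw [Qp]
        exact Finset.sum_congr rfl fun j _ => eulerianA_cast x s j
    _ = ∑ j ∈ Finset.range (s + 1), ∑ b ∈ Finset.range (j + 1),
        (-1 : ℝ) ^ (j - b) * ((s + 1).choose (j - b) : ℝ) * (b : ℝ) ^ s * x ^ (j + s) := by
        refine Finset.sum_congr rfl fun j _ => ?_
        rw [← Finset.sum_range_reflect]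
        refine Finset.sum_congr rfl fun b hb => ?_
        rw [Finset.mem_range] at hb
        rw [show j + 1 - 1 - b = j - b by omega, show j - (j - b) = b by omega]
    _ = ∑ b ∈ Finset.range (s + 1), ∑ a ∈ Finset.range (s + 1 - b),
        (-1 : ℝ) ^ a * ((s + 1).choose a : ℝ) * (b : ℝ) ^ s * x ^ (a + b + s) := by
        rw [sum_tri_shift s (fun j b =>
          (-1 : ℝ) ^ (j - b) * ((s + 1).choose (j - b) : ℝ) * (b : ℝ) ^ s * x ^ (j + s))]
        refine Finset.sum_congr rfl fun b _ => Finset.sum_congr rfl fun a _ => ?_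
        rw [Nat.add_sub_cancel]
    _ = ∑ b ∈ Finset.range (s + 1), ∑ a ∈ Finset.range (s + 1 - b),
        ∑ p ∈ Finset.range (s + 1),
          (surZ s p : ℝ) * ((-1 : ℝ) ^ a * ((s + 1).choose a : ℝ) * (b.choose p : ℝ) * x ^ (b + a + s)) := by
        refine Finset.sum_congr rfl fun b hb => Finset.sum_congr rfl fun a _ => ?_
        rw [Finset.mem_range] at hb
        have hcast : ((b : ℝ)) ^ s = ∑ p ∈ Finset.range (s + 1), (b.choose p : ℝ) * (surZ s p : ℝ) := by
          have h0 := pow_eq_sum_surZ s b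
          have h1 : ((b : ℤ) ^ s : ℤ) = ∑ p ∈ Finset.range (s + 1), (b.choose p : ℤ) * surZ s p := by
            rw [h0]
            refine Finset.sum_subset (by rw [Finset.range_subset_range]; omega) fun p _ hp => ?_
            rw [Finset.mem_range, not_lt] at hp
            rw [Nat.choose_eq_zero_of_lt (by omega), Nat.cast_zero, zero_mul]
          have := congrArg (Int.cast : ℤ → ℝ) h1
          push_cast at this
          exact this
        rw [hcast, Finset.mul_sum, Finset.sum_mul]
        refine Finset.sum_congr rfl fun p _ => ?_
        ring
    _ = ∑ p ∈ Finset.range (s + 1), ∑ b ∈ Finset.range (s + 1), ∑ a ∈ Finset.range (s + 1 - b),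
          (surZ s p : ℝ) * ((-1 : ℝ) ^ a * ((s + 1).choose a : ℝ) * (b.choose p : ℝ) * x ^ (b + a + s)) := by
        rw [Finset.sum_comm]
        exact Finset.sum_congr rfl fun b _ => Finset.sum_comm
    _ = ∑ p ∈ Finset.range (s + 1), (surZ s p : ℝ) * Tsum x s p := by
        refine Finset.sum_congr rfl fun p _ => ?_
        have hR : (surZ s p : ℝ) * Tsum x s p
            = ∑ u ∈ Finset.range (s + 1), ∑ i ∈ Finset.range (s + 1 - u),
              (surZ s p : ℝ) * ((-1 : ℝ) ^ u * ((s + 1).choose u : ℝ) * (i.choose p : ℝ) * x ^ (i + u + s)) := by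
          rw [Tsum, Finset.mul_sum]
          exact Finset.sum_congr rfl fun u _ => Finset.mul_sum _ _ _
        rw [hR]
        exact (sum_tri_swap s (fun u i =>
          (surZ s p : ℝ) * ((-1 : ℝ) ^ u * ((s + 1).choose u : ℝ) * (i.choose p : ℝ) * x ^ (i + u + s)))).symm
    _ = ∑ p ∈ Finset.range (s + 1),
        (surZ s p : ℝ) * ((-1 : ℝ) ^ s * (-1 : ℝ) ^ p * x ^ (2 * p)) := by
        refine Finset.sum_congr rfl fun p hp => ?_
        rw [Finset.mem_range] at hp
        rw [Tsum_eq x hx s p (by omega)]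

lemma surZ_zero_right (t : ℕ) (ht : 1 ≤ t) : surZ t 0 = 0 := by
  simp [surZ, SL, zero_pow (by omega : t ≠ 0)]

lemma Qp_zero (x : ℝ) : Qp x 0 = 1 := by
  simp [Qp, eulerianA]

noncomputable def gQ (x : ℝ) (s : ℕ) : ℝ := (-1 : ℝ) ^ s * Qp x s

noncomputable def HQ (x : ℝ) (t : ℕ) : ℝ :=
  ∑ s ∈ Finset.range (t + 1), (t.choose s : ℝ) * gQ x s

lemma gQ_zero (x : ℝ) : gQ x 0 = 1 := by simp [gQ, Qp_zero]

lemma HQ_zero (x : ℝ) : HQ x 0 = 1 := by simp [HQ, gQ_zero]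

lemma gQ_eq_fub (x : ℝ) (hx : x ^ 2 = x + 1) (s : ℕ) :
    gQ x s = ∑ p ∈ Finset.range (s + 1), (surZ s p : ℝ) * (-(x ^ 2)) ^ p := by
  rw [gQ, Qp_eq x hx, Finset.mul_sum]
  refine Finset.sum_congr rfl fun p _ => ?_
  rw [neg_pow (x ^ 2) p, ← pow_mul]
  have hs : (-1 : ℝ) ^ s * (-1 : ℝ) ^ s = 1 := by
    rw [← pow_add]
    exact Even.neg_one_pow ⟨s, rfl⟩
  linear_combination ((surZ s p : ℝ) * ((-1 : ℝ) ^ p * x ^ (2 * p))) * hs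

lemma fub_rec (y : ℝ) (t : ℕ) (ht : 1 ≤ t) :
    (∑ p ∈ Finset.range (t + 1), (surZ t p : ℝ) * y ^ p)
      = y * ∑ s ∈ Finset.range t, (t.choose s : ℝ) *
          ∑ p ∈ Finset.range (s + 1), (surZ s p : ℝ) * y ^ p := by
  rw [Finset.sum_range_succ']
  rw [show ((surZ t 0 : ℝ) * y ^ 0) = 0 by rw [surZ_zero_right t ht]; norm_num, add_zero]
  have step : ∀ p ∈ Finset.range t, (surZ t (p + 1) : ℝ) * y ^ (p + 1)
      = y * ∑ s ∈ Finset.range t, (t.choose s : ℝ) * ((surZ s p : ℝ) * y ^ p) := by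
    intro p _
    have h := surZ_succ t p
    have hc := congrArg (Int.cast : ℤ → ℝ) h
    push_cast at hc
    rw [hc, Finset.sum_mul, Finset.mul_sum]
    refine Finset.sum_congr rfl fun s _ => ?_
    ring
  rw [Finset.sum_congr rfl step, ← Finset.mul_sum]
  congr 1
  rw [Finset.sum_comm]
  refine Finset.sum_congr rfl fun s hs => ?_
  rw [Finset.mem_range] at hs
  rw [← Finset.mul_sum]
  congr 1
  refine (Finset.sum_subset (by rw [Finset.range_subset_range]; omega) fun p _ hp => ?_).symm
  rw [Finset.mem_range, not_lt] at hp
  rw [surZ_eq_zero s p (by omega)]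
  norm_num

lemma key_C (x : ℝ) (hx : x ^ 2 = x + 1) (t : ℕ) (ht : 1 ≤ t) :
    x * HQ x t = gQ x t := by
  have hg : ∀ s, gQ x s = ∑ p ∈ Finset.range (s + 1), (surZ s p : ℝ) * (-(x ^ 2)) ^ p :=
    gQ_eq_fub x hx
  have hrec := fub_rec (-(x ^ 2)) t ht
  rw [← hg] at hrec
  have hrec2 : gQ x t = -(x ^ 2) * ∑ s ∈ Finset.range t, (t.choose s : ℝ) * gQ x s := by
    rw [hrec]
    congr 1
    exact Finset.sum_congr rfl fun s _ => by rw [← hg]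
  rw [HQ, Finset.sum_range_succ, Nat.choose_self]
  set S := ∑ s ∈ Finset.range t, (t.choose s : ℝ) * gQ x s with hS
  rw [hrec2]
  push_cast
  linear_combination (-(x * S)) * hx

lemma star_prime (x : ℝ) (hx : x ^ 2 = x + 1) (m n : ℕ) :
    ∑ s ∈ Finset.range (m + 1), (-1 : ℝ) ^ s * (m.choose s : ℝ) *
        (((n : ℝ) + 1) ^ (m - s) * x - (n : ℝ) ^ (m - s)) * Qp x s
      = (n : ℝ) ^ m * (x - 1) := by
  have hSigma1 : ∑ s ∈ Finset.range (m + 1), (-1 : ℝ) ^ s * (m.choose s : ℝ) *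
        ((n : ℝ) + 1) ^ (m - s) * Qp x s
      = ∑ i ∈ Finset.range (m + 1), (m.choose i : ℝ) * (n : ℝ) ^ i * HQ x (m - i) := by
    have expand : ∀ s ∈ Finset.range (m + 1), (-1 : ℝ) ^ s * (m.choose s : ℝ) *
          ((n : ℝ) + 1) ^ (m - s) * Qp x s
        = ∑ i ∈ Finset.range (m + 1 - s),
            (m.choose s : ℝ) * ((m - s).choose i : ℝ) * (n : ℝ) ^ i * ((-1 : ℝ) ^ s * Qp x s) := by
      intro s hs
      rw [Finset.mem_range] at hs
      have hpow := add_pow (n : ℝ) 1 (m - s)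
      simp only [one_pow, mul_one] at hpow
      rw [hpow, show m - s + 1 = m + 1 - s by omega, Finset.mul_sum, Finset.sum_mul]
      refine Finset.sum_congr rfl fun i _ => ?_
      ring
    rw [Finset.sum_congr rfl expand,
      sum_tri_swap m (fun s i => (m.choose s : ℝ) * ((m - s).choose i : ℝ) * (n : ℝ) ^ i *
        ((-1 : ℝ) ^ s * Qp x s))]
    refine Finset.sum_congr rfl fun i hi => ?_
    rw [Finset.mem_range] at hi
    rw [HQ, Finset.mul_sum]
    rw [show m + 1 - i = (m - i) + 1 by omega]
    refine Finset.sum_congr rfl fun s hs => ?_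
    rw [Finset.mem_range] at hs
    have htri : (m.choose s : ℝ) * ((m - s).choose i : ℝ)
        = (m.choose i : ℝ) * ((m - i).choose s : ℝ) := by
      exact_mod_cast congrArg (Nat.cast : ℕ → ℝ) (choose_tri m s i)
    rw [gQ]
    linear_combination ((n : ℝ) ^ i * ((-1 : ℝ) ^ s * Qp x s)) * htri
  have hSigma2 : ∑ s ∈ Finset.range (m + 1), (-1 : ℝ) ^ s * (m.choose s : ℝ) *
        (n : ℝ) ^ (m - s) * Qp x s
      = ∑ i ∈ Finset.range (m + 1), (m.choose i : ℝ) * (n : ℝ) ^ i * gQ x (m - i) := by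
    rw [← Finset.sum_range_reflect (fun i => (m.choose i : ℝ) * (n : ℝ) ^ i * gQ x (m - i)) (m + 1)]
    refine Finset.sum_congr rfl fun s hs => ?_
    rw [Finset.mem_range] at hs
    rw [show m + 1 - 1 - s = m - s by omega, gQ, show m - (m - s) = s by omega,
      Nat.choose_symm (by omega : s ≤ m)]
    ring
  have hsplit : ∑ s ∈ Finset.range (m + 1), (-1 : ℝ) ^ s * (m.choose s : ℝ) *
        (((n : ℝ) + 1) ^ (m - s) * x - (n : ℝ) ^ (m - s)) * Qp x s
      = x * (∑ s ∈ Finset.range (m + 1), (-1 : ℝ) ^ s * (m.choose s : ℝ) *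
          ((n : ℝ) + 1) ^ (m - s) * Qp x s)
        - ∑ s ∈ Finset.range (m + 1), (-1 : ℝ) ^ s * (m.choose s : ℝ) *
          (n : ℝ) ^ (m - s) * Qp x s := by
    rw [Finset.mul_sum, ← Finset.sum_sub_distrib]
    refine Finset.sum_congr rfl fun s _ => ?_
    ring
  rw [hsplit, hSigma1, hSigma2, Finset.mul_sum, ← Finset.sum_sub_distrib]
  have hterm : ∀ i ∈ Finset.range (m + 1),
      x * ((m.choose i : ℝ) * (n : ℝ) ^ i * HQ x (m - i))
        - (m.choose i : ℝ) * (n : ℝ) ^ i * gQ x (m - i)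
      = (m.choose i : ℝ) * (n : ℝ) ^ i * (x * HQ x (m - i) - gQ x (m - i)) := by
    intro i _
    ring
  rw [Finset.sum_congr rfl hterm, Finset.sum_range_succ]
  rw [Finset.sum_eq_zero fun i hi => ?_, zero_add]
  · rw [Nat.sub_self, HQ_zero, gQ_zero, Nat.choose_self]
    push_cast
    ring
  · rw [Finset.mem_range] at hi
    rw [key_C x hx (m - i) (by omega), sub_self, mul_zero]

lemma star_Icc (x : ℝ) (hx : x ^ 2 = x + 1) (m n : ℕ) :
    ∑ s ∈ Finset.Icc 1 m, (-1 : ℝ) ^ (s + 1) * (m.choose s : ℝ) *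
        (((n : ℝ) + 1) ^ (m - s) * x - (n : ℝ) ^ (m - s)) * Qp x s
      = (((n : ℝ) + 1) ^ m - (n : ℝ) ^ m) * x := by
  have hins : Finset.range (m + 1) = insert 0 (Finset.Icc 1 m) := by
    ext a
    simp only [Finset.mem_range, Finset.mem_insert, Finset.mem_Icc]
    omega
  have hsp := star_prime x hx m n
  rw [hins, Finset.sum_insert (by simp)] at hsp
  have hneg : ∑ s ∈ Finset.Icc 1 m, (-1 : ℝ) ^ (s + 1) * (m.choose s : ℝ) *
        (((n : ℝ) + 1) ^ (m - s) * x - (n : ℝ) ^ (m - s)) * Qp x s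
      = -∑ s ∈ Finset.Icc 1 m, (-1 : ℝ) ^ s * (m.choose s : ℝ) *
        (((n : ℝ) + 1) ^ (m - s) * x - (n : ℝ) ^ (m - s)) * Qp x s := by
    rw [← Finset.sum_neg_distrib]
    refine Finset.sum_congr rfl fun s _ => ?_
    ring
  rw [hneg]
  simp only [pow_zero, Nat.choose_zero_right, Nat.cast_one, one_mul, Nat.sub_zero,
    Qp_zero, mul_one] at hsp
  linarith [hsp]

lemma eulerianA_zero_right (s : ℕ) (hs : 1 ≤ s) : eulerianA s 0 = 0 := by
  simp [eulerianA, zero_pow (by omega : s ≠ 0)]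

lemma Qp_Icc (x : ℝ) (s : ℕ) (hs : 1 ≤ s) :
    ∑ j ∈ Finset.Icc 1 s, (eulerianA s j : ℝ) * x ^ (j + s) = Qp x s := by
  rw [Qp, show Finset.range (s + 1) = insert 0 (Finset.Icc 1 s) by
    ext a; simp only [Finset.mem_range, Finset.mem_insert, Finset.mem_Icc]; omega,
    Finset.sum_insert (by simp), eulerianA_zero_right s hs]
  norm_num

lemma lemma_G (x : ℝ) (hx : x ^ 2 = x + 1) (m n : ℕ) :
    (∑ k ∈ Finset.Icc 1 n, (k : ℝ) ^ m * x ^ k) =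
      -(if m = 0 then (1 : ℝ) else 0)
        + (n : ℝ) ^ m * x ^ (n + 2)
        + (-1) ^ (m + 1) * ∑ j ∈ Finset.range (m + 1), (eulerianA m j : ℝ) * x ^ (j + m + 1)
        - ∑ s ∈ Finset.Icc 1 m, (-1 : ℝ) ^ (s + 1) * (m.choose s : ℝ) * (n : ℝ) ^ (m - s) *
            ∑ j ∈ Finset.Icc 1 s, (eulerianA s j : ℝ) * x ^ (j + n + s + 1) := by
  induction n with
  | zero =>
    rw [show Finset.Icc 1 0 = (∅ : Finset ℕ) from rfl, Finset.sum_empty]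
    by_cases hm : m = 0
    · subst hm
      simp only [Finset.Icc_self, pow_zero, Nat.cast_zero, if_pos rfl]
      rw [show Finset.Icc 1 0 = (∅ : Finset ℕ) from rfl, Finset.sum_empty]
      rw [Finset.sum_range_one]
      have : eulerianA 0 0 = 1 := by simp [eulerianA]
      rw [this]
      norm_num
      linear_combination -hx
    · have hm1 : 1 ≤ m := by omega
      rw [if_neg hm, Finset.sum_eq_single_of_mem m (Finset.mem_Icc.mpr ⟨hm1, le_refl m⟩)]
      · rw [Nat.sub_self, pow_zero, Nat.choose_self]
        rw [show Finset.range (m + 1) = insert 0 (Finset.Icc 1 m) by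
          ext a; simp only [Finset.mem_range, Finset.mem_insert, Finset.mem_Icc]; omega,
          Finset.sum_insert (by simp), eulerianA_zero_right m hm1]
        have he : ∀ j ∈ Finset.Icc 1 m, (eulerianA m j : ℝ) * x ^ (j + 0 + m + 1)
            = (eulerianA m j : ℝ) * x ^ (j + m + 1) := by
          intro j _
          norm_num
        rw [Finset.sum_congr rfl he, Nat.cast_zero, zero_pow hm]
        push_cast
        ring
      · intro s hs hsm
        rw [Finset.mem_Icc] at hs
        rw [Nat.cast_zero, zero_pow (by omega : m - s ≠ 0)]
        ring
  | succ n IH =>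
    rw [Finset.sum_Icc_succ_top (by omega : 1 ≤ n + 1), IH]
    have hinner1 : ∀ s ∈ Finset.Icc 1 m,
        (∑ j ∈ Finset.Icc 1 s, (eulerianA s j : ℝ) * x ^ (j + (n + 1) + s + 1))
          = Qp x s * (x ^ (n + 1) * x) := by
      intro s hs
      rw [Finset.mem_Icc] at hs
      rw [← Qp_Icc x s hs.1, Finset.sum_mul]
      refine Finset.sum_congr rfl fun j _ => ?_
      ring
    have hinner0 : ∀ s ∈ Finset.Icc 1 m,
        (∑ j ∈ Finset.Icc 1 s, (eulerianA s j : ℝ) * x ^ (j + n + s + 1))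
          = Qp x s * x ^ (n + 1) := by
      intro s hs
      rw [Finset.mem_Icc] at hs
      rw [← Qp_Icc x s hs.1, Finset.sum_mul]
      refine Finset.sum_congr rfl fun j _ => ?_
      ring
    have hstar2 : ∑ s ∈ Finset.Icc 1 m, (-1 : ℝ) ^ (s + 1) * (m.choose s : ℝ) *
          (((n : ℝ) + 1) ^ (m - s) * x - (n : ℝ) ^ (m - s)) * Qp x s * x ^ (n + 1)
        = (((n : ℝ) + 1) ^ m - (n : ℝ) ^ m) * x * x ^ (n + 1) := by
      rw [← Finset.sum_mul, star_Icc x hx m n]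
    have hS1 : ∑ s ∈ Finset.Icc 1 m, (-1 : ℝ) ^ (s + 1) * (m.choose s : ℝ) * ((n + 1 : ℕ) : ℝ) ^ (m - s) *
          ∑ j ∈ Finset.Icc 1 s, (eulerianA s j : ℝ) * x ^ (j + (n + 1) + s + 1)
        = ∑ s ∈ Finset.Icc 1 m, (-1 : ℝ) ^ (s + 1) * (m.choose s : ℝ) * ((n : ℝ) + 1) ^ (m - s) *
            (Qp x s * (x ^ (n + 1) * x)) := by
      refine Finset.sum_congr rfl fun s hs => ?_
      rw [hinner1 s hs]
      push_cast
      ring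
    have hS0 : ∑ s ∈ Finset.Icc 1 m, (-1 : ℝ) ^ (s + 1) * (m.choose s : ℝ) * (n : ℝ) ^ (m - s) *
          ∑ j ∈ Finset.Icc 1 s, (eulerianA s j : ℝ) * x ^ (j + n + s + 1)
        = ∑ s ∈ Finset.Icc 1 m, (-1 : ℝ) ^ (s + 1) * (m.choose s : ℝ) * (n : ℝ) ^ (m - s) *
            (Qp x s * x ^ (n + 1)) := by
      refine Finset.sum_congr rfl fun s hs => ?_
      rw [hinner0 s hs]
    have hmerge : ∑ s ∈ Finset.Icc 1 m, (-1 : ℝ) ^ (s + 1) * (m.choose s : ℝ) * ((n : ℝ) + 1) ^ (m - s) *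
            (Qp x s * (x ^ (n + 1) * x))
          - ∑ s ∈ Finset.Icc 1 m, (-1 : ℝ) ^ (s + 1) * (m.choose s : ℝ) * (n : ℝ) ^ (m - s) *
            (Qp x s * x ^ (n + 1))
        = ∑ s ∈ Finset.Icc 1 m, (-1 : ℝ) ^ (s + 1) * (m.choose s : ℝ) *
          (((n : ℝ) + 1) ^ (m - s) * x - (n : ℝ) ^ (m - s)) * Qp x s * x ^ (n + 1) := by
      rw [← Finset.sum_sub_distrib]
      refine Finset.sum_congr rfl fun s _ => ?_
      ring
    rw [hS1, hS0]
    push_cast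
    linear_combination hmerge + hstar2 - ((n : ℝ) + 1) ^ m * x ^ (n + 1) * hx

open Real goldenRatio

lemma fibZ_binet (z : ℤ) : (fibZ z : ℝ) = (φ ^ z - ψ ^ z) / √5 := by
  rcases le_or_gt 0 z with hz | hz
  · obtain ⟨k, rfl⟩ : ∃ k : ℕ, z = (k : ℤ) := ⟨z.toNat, (Int.toNat_of_nonneg hz).symm⟩
    rw [fibZ, if_pos hz]
    simp only [Int.toNat_natCast]
    rw [zpow_natCast, zpow_natCast]
    push_cast
    exact Real.coe_fib_eq k
  · rw [fibZ, if_neg (by omega)]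
    set k := (-z).toNat with hk
    have hzk : z = -(k : ℤ) := by omega
    rw [hzk]
    push_cast
    rw [zpow_neg, zpow_neg, zpow_natCast, zpow_natCast, ← inv_pow, ← inv_pow,
      inv_goldenRatio, inv_goldenConj, Real.coe_fib_eq, neg_pow ψ k, neg_pow φ k]
    ring

theorem brousseau_fib_sum_polynomial_form (m n : ℕ) (r : ℤ) :
    (∑ k ∈ Finset.Icc 1 n, (k : ℤ) ^ m * fibZ (k + r)) =
      -(if m = 0 then (1 : ℤ) else 0) * fibZ r
        + (n : ℤ) ^ m * fibZ (n + r + 2)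
        + (-1) ^ (m + 1) * ∑ j ∈ Finset.range (m + 1), eulerianA m j * fibZ (j + m + r + 1)
        - ∑ s ∈ Finset.Icc 1 m, (-1 : ℤ) ^ (s + 1) * (m.choose s : ℤ) * (n : ℤ) ^ (m - s) *
            ∑ j ∈ Finset.Icc 1 s, eulerianA s j * fibZ (j + n + s + r + 1) := by
  have hφ : φ ≠ 0 := goldenRatio_ne_zero
  have hψ : ψ ≠ 0 := goldenConj_ne_zero
  have key : ∀ e : ℕ, (fibZ ((e : ℤ) + r) : ℝ)
      = φ ^ e * (φ ^ r / √5) - ψ ^ e * (ψ ^ r / √5) := by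
    intro e
    rw [fibZ_binet, zpow_add₀ hφ, zpow_add₀ hψ, zpow_natCast, zpow_natCast]
    ring
  apply Int.cast_injective (α := ℝ)
  push_cast
  have hr : (fibZ r : ℝ) = (φ ^ r / √5) - (ψ ^ r / √5) := by
    rw [fibZ_binet]; ring
  have hn2 : (fibZ ((n : ℤ) + r + 2) : ℝ)
      = φ ^ (n + 2) * (φ ^ r / √5) - ψ ^ (n + 2) * (ψ ^ r / √5) := by
    rw [show ((n : ℤ) + r + 2) = ((n + 2 : ℕ) : ℤ) + r by push_cast; ring, key]
  have hL : ∑ k ∈ Finset.Icc 1 n, (k : ℝ) ^ m * (fibZ ((k : ℤ) + r) : ℝ)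
      = (∑ k ∈ Finset.Icc 1 n, (k : ℝ) ^ m * φ ^ k) * (φ ^ r / √5)
        - (∑ k ∈ Finset.Icc 1 n, (k : ℝ) ^ m * ψ ^ k) * (ψ ^ r / √5) := by
    rw [Finset.sum_mul, Finset.sum_mul, ← Finset.sum_sub_distrib]
    refine Finset.sum_congr rfl fun k _ => ?_
    rw [key k]
    ring
  have hE : ∑ j ∈ Finset.range (m + 1), (eulerianA m j : ℝ) * (fibZ ((j : ℤ) + m + r + 1) : ℝ)
      = (∑ j ∈ Finset.range (m + 1), (eulerianA m j : ℝ) * φ ^ (j + m + 1)) * (φ ^ r / √5)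
        - (∑ j ∈ Finset.range (m + 1), (eulerianA m j : ℝ) * ψ ^ (j + m + 1)) * (ψ ^ r / √5) := by
    rw [Finset.sum_mul, Finset.sum_mul, ← Finset.sum_sub_distrib]
    refine Finset.sum_congr rfl fun j _ => ?_
    rw [show ((j : ℤ) + m + r + 1) = ((j + m + 1 : ℕ) : ℤ) + r by push_cast; ring, key]
    ring
  have hS : ∑ s ∈ Finset.Icc 1 m, (-1 : ℝ) ^ (s + 1) * (m.choose s : ℝ) * (n : ℝ) ^ (m - s) *
        ∑ j ∈ Finset.Icc 1 s, (eulerianA s j : ℝ) * (fibZ ((j : ℤ) + n + s + r + 1) : ℝ)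
      = (∑ s ∈ Finset.Icc 1 m, (-1 : ℝ) ^ (s + 1) * (m.choose s : ℝ) * (n : ℝ) ^ (m - s) *
            ∑ j ∈ Finset.Icc 1 s, (eulerianA s j : ℝ) * φ ^ (j + n + s + 1)) * (φ ^ r / √5)
        - (∑ s ∈ Finset.Icc 1 m, (-1 : ℝ) ^ (s + 1) * (m.choose s : ℝ) * (n : ℝ) ^ (m - s) *
            ∑ j ∈ Finset.Icc 1 s, (eulerianA s j : ℝ) * ψ ^ (j + n + s + 1)) * (ψ ^ r / √5) := by
    rw [Finset.sum_mul, Finset.sum_mul, ← Finset.sum_sub_distrib]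
    refine Finset.sum_congr rfl fun s _ => ?_
    have hin : ∑ j ∈ Finset.Icc 1 s, (eulerianA s j : ℝ) * (fibZ ((j : ℤ) + n + s + r + 1) : ℝ)
        = (∑ j ∈ Finset.Icc 1 s, (eulerianA s j : ℝ) * φ ^ (j + n + s + 1)) * (φ ^ r / √5)
          - (∑ j ∈ Finset.Icc 1 s, (eulerianA s j : ℝ) * ψ ^ (j + n + s + 1)) * (ψ ^ r / √5) := by
      rw [Finset.sum_mul, Finset.sum_mul, ← Finset.sum_sub_distrib]
      refine Finset.sum_congr rfl fun j _ => ?_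
      rw [show ((j : ℤ) + n + s + r + 1) = ((j + n + s + 1 : ℕ) : ℤ) + r by push_cast; ring, key]
      ring
    rw [hin]
    ring
  rw [hL, hr, hn2, hE, hS]
  have G1 := lemma_G φ goldenRatio_sq m n
  have G2 := lemma_G ψ goldenConj_sq m n
  linear_combination (φ ^ r / √5) * G1 - (ψ ^ r / √5) * G2
end

section
/- Let a, b, p, q be complex numbers with p \neq 0, q \neq 0 and p \neq q + 1, and let (w_j) be the Horadam sequence with w_0 = a, w_1 = b, w_j = p w_{j-1} - q w_{j-2}. Suppose \mathcal{P}_1, \mathcal{P}_2 : \mathbb{N} \times \mathbb{N} \to \mathbb{C} and \mathcal{C} : \mathbb{N} \to \mathbb{C} satisfy, for all nonnegative integers m and n: (q - p + 1)\mathcal{P}_1(m,n) = (n+2)^m q - \sum_{j=0}^{m-1} \binom{m}{j} (2^{m-j} q - p) \mathcal{P}_1(j,n), (q - p + 1)\mathcal{P}_2(m,n) = -(n+1)^m - \sum_{j=0}^{m-1} \binom{m}{j} (2^{m-j} q - p) \mathcal{P}_2(j,n), and (q - p + 1)\mathcal{C}(m) = -2^m a q + b - \sum_{j=0}^{m-1}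 \binom{m}{j} (2^{m-j} q - p) \mathcal{C}(j) (empty sums when m = 0). Then for all nonnegative integers m and n: \sum_{k=1}^{n} k^m w_k = \mathcal{P}_1(m,n) w_n + \mathcal{P}_2(m,n) w_{n+1} + \mathcal{C}(m). -/
private lemma binom_aux (m : ℕ) (x y : ℂ) :
    ∑ j ∈ Finset.range m, (m.choose j : ℂ) * y ^ (m - j) * x ^ j = (x + y) ^ m - x ^ m := by
  have h := add_pow x y m
  rw [Finset.sum_range_succ] at h
  simp only [Nat.choose_self, Nat.cast_one, Nat.sub_self, pow_zero, mul_one, one_mul] at h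
  rw [h]
  have : ∑ j ∈ Finset.range m, (m.choose j : ℂ) * y ^ (m - j) * x ^ j
      = ∑ j ∈ Finset.range m, x ^ j * y ^ (m - j) * (m.choose j : ℂ) := by
    apply Finset.sum_congr rfl; intro j _; ring
  rw [this]; ring

private lemma csum_aux (p q : ℂ) (m : ℕ) (x : ℂ) :
    ∑ j ∈ Finset.range m, (m.choose j : ℂ) * (2 ^ (m - j) * q - p) * x ^ j
      = q * ((x + 2) ^ m - x ^ m) - p * ((x + 1) ^ m - x ^ m) := by
  have b2 := binom_aux m x 2
  have b1 := binom_aux m x 1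
  simp only [one_pow] at b1
  calc ∑ j ∈ Finset.range m, (m.choose j : ℂ) * (2 ^ (m - j) * q - p) * x ^ j
      = ∑ j ∈ Finset.range m, (q * ((m.choose j : ℂ) * 2 ^ (m - j) * x ^ j)
          - p * ((m.choose j : ℂ) * 1 * x ^ j)) := by
        apply Finset.sum_congr rfl; intro j _; ring
    _ = q * ∑ j ∈ Finset.range m, (m.choose j : ℂ) * 2 ^ (m - j) * x ^ j
          - p * ∑ j ∈ Finset.range m, (m.choose j : ℂ) * 1 * x ^ j := by
        rw [Finset.sum_sub_distrib, Finset.mul_sum, Finset.mul_sum]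
    _ = q * ((x + 2) ^ m - x ^ m) - p * ((x + 1) ^ m - x ^ m) := by rw [b2, b1]

theorem horadam_ledin_form (a b p q : ℂ) (hp : p ≠ 0) (hq : q ≠ 0) (hpq : p ≠ q + 1)
    (w : ℕ → ℂ) (hw0 : w 0 = a) (hw1 : w 1 = b)
    (hw : ∀ j : ℕ, w (j + 2) = p * w (j + 1) - q * w j)
    (P1 P2 : ℕ → ℕ → ℂ) (C : ℕ → ℂ)
    (hP1 : ∀ m n : ℕ, (q - p + 1) * P1 m n = ((n : ℂ) + 2) ^ m * q
      - ∑ j ∈ Finset.range m, (m.choose j : ℂ) * (2 ^ (m - j) * q - p) * P1 j n)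
    (hP2 : ∀ m n : ℕ, (q - p + 1) * P2 m n = -((n : ℂ) + 1) ^ m
      - ∑ j ∈ Finset.range m, (m.choose j : ℂ) * (2 ^ (m - j) * q - p) * P2 j n)
    (hC : ∀ m : ℕ, (q - p + 1) * C m = -2 ^ m * a * q + b
      - ∑ j ∈ Finset.range m, (m.choose j : ℂ) * (2 ^ (m - j) * q - p) * C j) :
    ∀ m n : ℕ, (∑ k ∈ Finset.Icc 1 n, (k : ℂ) ^ m * w k) =
      P1 m n * w n + P2 m n * w (n + 1) + C m := by
  have hd : q - p + 1 ≠ 0 := by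
    intro h; apply hpq; linear_combination -h
  -- Lemma 1 : P1 m n = -q * P2 m (n+1)
  have L1 : ∀ m n : ℕ, P1 m n = -q * P2 m (n + 1) := by
    intro m
    induction m using Nat.strong_induction_on with
    | _ m ih =>
      intro n
      have h1 := hP1 m n
      have h2 := hP2 m (n + 1)
      push_cast at h2
      have hs : ∑ j ∈ Finset.range m, (m.choose j : ℂ) * (2 ^ (m - j) * q - p) * P1 j n
          = ∑ j ∈ Finset.range m, (m.choose j : ℂ) * (2 ^ (m - j) * q - p) * (-q * P2 j (n + 1)) := by
        apply Finset.sum_congr rfl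
        intro j hj
        rw [ih j (Finset.mem_range.mp hj) n]
      rw [hs] at h1
      have hs2 : ∑ j ∈ Finset.range m, (m.choose j : ℂ) * (2 ^ (m - j) * q - p) * (-q * P2 j (n + 1))
          = -q * ∑ j ∈ Finset.range m, (m.choose j : ℂ) * (2 ^ (m - j) * q - p) * P2 j (n + 1) := by
        rw [Finset.mul_sum]
        apply Finset.sum_congr rfl; intro j _; ring
      have key : (q - p + 1) * P1 m n = (q - p + 1) * (-q * P2 m (n + 1)) := by
        linear_combination h1 - hs2 + q * h2
      exact mul_left_cancel₀ hd key
  -- Lemma 2 : P1 m (n+1) + p * P2 m (n+1) = P2 m n + (n+1)^m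
  have L2 : ∀ m n : ℕ, P1 m (n + 1) + p * P2 m (n + 1) = P2 m n + ((n : ℂ) + 1) ^ m := by
    intro m
    induction m using Nat.strong_induction_on with
    | _ m ih =>
      intro n
      have h1 := hP1 m (n + 1)
      have h2 := hP2 m (n + 1)
      have h3 := hP2 m n
      push_cast at h1 h2
      have hs : ∑ j ∈ Finset.range m, (m.choose j : ℂ) * (2 ^ (m - j) * q - p) * P1 j (n + 1)
          = ∑ j ∈ Finset.range m, (m.choose j : ℂ) * (2 ^ (m - j) * q - p)
              * (P2 j n + ((n : ℂ) + 1) ^ j - p * P2 j (n + 1)) := by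
        apply Finset.sum_congr rfl
        intro j hj
        have := ih j (Finset.mem_range.mp hj) n
        rw [show P1 j (n + 1) = P2 j n + ((n : ℂ) + 1) ^ j - p * P2 j (n + 1) by
          linear_combination this]
      rw [hs] at h1
      have hsplit : ∑ j ∈ Finset.range m, (m.choose j : ℂ) * (2 ^ (m - j) * q - p)
              * (P2 j n + ((n : ℂ) + 1) ^ j - p * P2 j (n + 1))
          = (∑ j ∈ Finset.range m, (m.choose j : ℂ) * (2 ^ (m - j) * q - p) * P2 j n)
            + (∑ j ∈ Finset.range m, (m.choose j : ℂ) * (2 ^ (m - j) * q - p) * ((n : ℂ) + 1) ^ j)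
            - p * (∑ j ∈ Finset.range m, (m.choose j : ℂ) * (2 ^ (m - j) * q - p) * P2 j (n + 1)) := by
        rw [Finset.mul_sum, ← Finset.sum_add_distrib, ← Finset.sum_sub_distrib]
        apply Finset.sum_congr rfl; intro j _; ring
      rw [hsplit] at h1
      have hE := csum_aux p q m ((n : ℂ) + 1)
      have key : (q - p + 1) * (P1 m (n + 1) + p * P2 m (n + 1))
          = (q - p + 1) * (P2 m n + ((n : ℂ) + 1) ^ m) := by
        linear_combination h1 + p * h2 - h3 - hE
      exact mul_left_cancel₀ hd key
  -- Lemma 3 : a * P1 m 0 + b * P2 m 0 + C m = 0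
  have L3 : ∀ m : ℕ, a * P1 m 0 + b * P2 m 0 + C m = 0 := by
    intro m
    induction m using Nat.strong_induction_on with
    | _ m ih =>
      have h1 := hP1 m 0
      have h2 := hP2 m 0
      have h3 := hC m
      push_cast at h1 h2
      have hs : ∑ j ∈ Finset.range m, (m.choose j : ℂ) * (2 ^ (m - j) * q - p)
            * (a * P1 j 0 + b * P2 j 0 + C j) = 0 := by
        apply Finset.sum_eq_zero
        intro j hj
        rw [ih j (Finset.mem_range.mp hj), mul_zero]
      have hsplit : ∑ j ∈ Finset.range m, (m.choose j : ℂ) * (2 ^ (m - j) * q - p)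
              * (a * P1 j 0 + b * P2 j 0 + C j)
          = a * (∑ j ∈ Finset.range m, (m.choose j : ℂ) * (2 ^ (m - j) * q - p) * P1 j 0)
            + b * (∑ j ∈ Finset.range m, (m.choose j : ℂ) * (2 ^ (m - j) * q - p) * P2 j 0)
            + (∑ j ∈ Finset.range m, (m.choose j : ℂ) * (2 ^ (m - j) * q - p) * C j) := by
        rw [Finset.mul_sum, Finset.mul_sum, ← Finset.sum_add_distrib, ← Finset.sum_add_distrib]
        apply Finset.sum_congr rfl; intro j _; ring
      have key : (q - p + 1) * (a * P1 m 0 + b * P2 m 0 + C m) = (q - p + 1) * 0 := by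
        rw [mul_zero]
        linear_combination a * h1 + b * h2 + h3 + hsplit - hs
      exact mul_left_cancel₀ hd key
  intro m n
  induction n with
  | zero =>
    rw [Finset.Icc_eq_empty (by omega), Finset.sum_empty]
    rw [hw0, hw1]
    linear_combination -L3 m
  | succ n ihn =>
    rw [Finset.sum_Icc_succ_top (by omega : 1 ≤ n + 1), ihn]
    have h1 := L1 m n
    have h2 := L2 m n
    have hwn := hw n
    push_cast
    rw [show n + 1 + 1 = n + 2 from rfl, hwn]
    linear_combination w n * h1 - w (n + 1) * h2
end

section
/- Let q be a nonzero complex number, let \delta be a complex number with \delta^2 = 1 - 4q and \delta \neq 0, and set \tau = (1+\delta)/2, \sigma = (1-\delta)/2, \Delta = \tau - \sigma = \delta, \mathbb{A} = (b - a\sigma)/\Delta, \mathbb{B} = (a\tau - b)/\Delta, where a, b are complex numbers. Then for every nonnegative integer s: \mathbb{A} A_s(\tau) + \mathbb{B} A_s(\sigma) = \sum_{t=0}^{s} A(s,t) w^*_t and \mathbb{A} A_s(\tau) - \mathbb{B} A_s(\sigma) = (1/\Delta) \sum_{t=0}^{s} A(s,t) (w^*_{t+1} - q w^*_{t-1}).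 -/
/-- The Eulerian polynomial `A_i(x) = ∑_{j=0}^{i} A(i,j) x^j` over the complex numbers. -/
noncomputable def eulerianPolyC (i : ℕ) (x : ℂ) : ℂ :=
  ∑ j ∈ Finset.range (i + 1), (eulerianA i j : ℂ) * x ^ j

theorem eulerian_poly_wstar_identities (a b q δ : ℂ) (hq : q ≠ 0)
    (hδ : δ ^ 2 = 1 - 4 * q) (hδ0 : δ ≠ 0)
    (w : ℤ → ℂ) (hw0 : w 0 = a) (hw1 : w 1 = b)
    (hw : ∀ j : ℤ, w j = w (j - 1) - q * w (j - 2)) :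
    ∀ s : ℕ,
      ((b - a * ((1 - δ) / 2)) / δ) * eulerianPolyC s ((1 + δ) / 2)
          + ((a * ((1 + δ) / 2) - b) / δ) * eulerianPolyC s ((1 - δ) / 2) =
        ∑ t ∈ Finset.range (s + 1), (eulerianA s t : ℂ) * w t ∧
      ((b - a * ((1 - δ) / 2)) / δ) * eulerianPolyC s ((1 + δ) / 2)
          - ((a * ((1 + δ) / 2) - b) / δ) * eulerianPolyC s ((1 - δ) / 2) =
        (1 / δ) * ∑ t ∈ Finset.range (s + 1), (eulerianA s t : ℂ) * (w ((t : ℤ) + 1) - q * w ((t : ℤ) - 1)) := by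
  set τ : ℂ := (1 + δ) / 2 with hτdef
  set σ : ℂ := (1 - δ) / 2 with hσdef
  set A : ℂ := (b - a * σ) / δ with hA
  set B : ℂ := (a * τ - b) / δ with hB
  set f : ℤ → ℂ := (fun t => A * τ ^ t + B * σ ^ t) with hf
  clear_value f
  clear_value A B
  clear_value τ σ
  have hτσ : τ * σ = q := by rw [hτdef, hσdef]; linear_combination (-1/4 : ℂ) * hδ
  have hτ0 : τ ≠ 0 := fun h => hq (by rw [← hτσ, h, zero_mul])
  have hσ0 : σ ≠ 0 := fun h => hq (by rw [← hτσ, h, mul_zero])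
  have hτ2 : τ ^ 2 = τ - q := by rw [hτdef]; linear_combination (1/4 : ℂ) * hδ
  have hσ2 : σ ^ 2 = σ - q := by rw [hσdef]; linear_combination (1/4 : ℂ) * hδ
  have hδτσ : τ - σ = δ := by rw [hτdef, hσdef]; ring
  have hpow : ∀ (x : ℂ), x ≠ 0 → x ^ 2 = x - q →
      ∀ t : ℤ, x ^ t = x ^ (t - 1) - q * x ^ (t - 2) := by
    intro x hx hx2 t
    have e1 : x ^ t = x ^ (t - 2) * x ^ (2 : ℕ) := by
      rw [← zpow_natCast x 2, ← zpow_add₀ hx]; norm_num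
    have e2 : x ^ (t - 1) = x ^ (t - 2) * x := by
      rw [← zpow_add_one₀ hx]; congr 1; ring
    rw [e1, e2, hx2]; ring
  have hfrec : ∀ t : ℤ, f t = f (t - 1) - q * f (t - 2) := by
    intro t
    simp only [hf]
    rw [hpow τ hτ0 hτ2 t, hpow σ hσ0 hσ2 t]; ring
  have h0 : w 0 = f 0 := by
    simp only [hf, zpow_zero, mul_one, hw0]
    rw [hA, hB, hτdef, hσdef]
    field_simp
    ring
  have h1 : w 1 = f 1 := by
    simp only [hf, zpow_one, hw1]
    rw [hA, hB, hτdef, hσdef]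
    field_simp
    ring
  have key : ∀ t : ℤ, w t = f t ∧ w (t + 1) = f (t + 1) := by
    intro t
    induction t using Int.induction_on with
    | zero => exact ⟨h0, h1⟩
    | succ n ih =>
      refine ⟨ih.2, ?_⟩
      have hw' := hw ((n : ℤ) + 2)
      have hf' := hfrec ((n : ℤ) + 2)
      rw [show ((n : ℤ) + 2) - 1 = (n : ℤ) + 1 by ring,
        show ((n : ℤ) + 2) - 2 = (n : ℤ) by ring] at hw' hf'
      rw [show (n : ℤ) + 1 + 1 = (n : ℤ) + 2 by ring, hw', hf', ih.1, ih.2]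
    | pred n ih =>
      refine ⟨?_, by rw [show -(n : ℤ) - 1 + 1 = -(n : ℤ) by ring]; exact ih.1⟩
      have hw' := hw (-(n : ℤ) + 1)
      have hf' := hfrec (-(n : ℤ) + 1)
      rw [show (-(n : ℤ) + 1) - 1 = -(n : ℤ) by ring,
        show (-(n : ℤ) + 1) - 2 = -(n : ℤ) - 1 by ring] at hw' hf'
      have ih2 : w (-(n : ℤ) + 1) = f (-(n : ℤ) + 1) := by
        rw [show -(n : ℤ) + 1 = -(n : ℤ) + 1 by ring]; exact ih.2
      have hcancel : q * w (-(n : ℤ) - 1) = q * f (-(n : ℤ) - 1) := by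
        linear_combination hw' - hf' - ih2 + ih.1
      exact mul_left_cancel₀ hq hcancel
  intro s
  have hsum1 : ∑ t ∈ Finset.range (s + 1), (eulerianA s t : ℂ) * w t =
      A * eulerianPolyC s τ + B * eulerianPolyC s σ := by
    unfold eulerianPolyC
    rw [Finset.mul_sum, Finset.mul_sum, ← Finset.sum_add_distrib]
    refine Finset.sum_congr rfl fun t _ => ?_
    rw [(key t).1]
    simp only [hf, zpow_natCast]
    ring
  have hsum2 : ∀ t : ℕ, w ((t : ℤ) + 1) - q * w ((t : ℤ) - 1) =
      δ * (A * τ ^ t - B * σ ^ t) := by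
    intro t
    rw [(key ((t : ℤ) + 1)).1, (key ((t : ℤ) - 1)).1]
    simp only [hf]
    have eτ : τ ^ ((t : ℤ) + 1) = τ ^ t * τ := by
      rw [zpow_add_one₀ hτ0, zpow_natCast]
    have eσ : σ ^ ((t : ℤ) + 1) = σ ^ t * σ := by
      rw [zpow_add_one₀ hσ0, zpow_natCast]
    have h1' : q * τ ^ ((t : ℤ) - 1) = σ * τ ^ t := by
      rw [zpow_sub_one₀ hτ0, zpow_natCast, ← hτσ]
      field_simp
    have h2' : q * σ ^ ((t : ℤ) - 1) = τ * σ ^ t := by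
      rw [zpow_sub_one₀ hσ0, zpow_natCast, ← hτσ]
      field_simp
    rw [eτ, eσ]
    linear_combination -A * h1' - B * h2' + (A * τ ^ t - B * σ ^ t) * hδτσ
  have hsum2' : ∑ t ∈ Finset.range (s + 1),
      (eulerianA s t : ℂ) * (w ((t : ℤ) + 1) - q * w ((t : ℤ) - 1)) =
      δ * (A * eulerianPolyC s τ - B * eulerianPolyC s σ) := by
    unfold eulerianPolyC
    calc ∑ t ∈ Finset.range (s + 1),
        (eulerianA s t : ℂ) * (w ((t : ℤ) + 1) - q * w ((t : ℤ) - 1))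
        = ∑ t ∈ Finset.range (s + 1),
          (δ * (A * ((eulerianA s t : ℂ) * τ ^ t)) - δ * (B * ((eulerianA s t : ℂ) * σ ^ t))) := by
          refine Finset.sum_congr rfl fun t _ => ?_
          rw [hsum2 t]; ring
      _ = _ := by
          rw [Finset.sum_sub_distrib, ← Finset.mul_sum, ← Finset.mul_sum,
            ← Finset.mul_sum, ← Finset.mul_sum]
          ring
  refine ⟨hsum1.symm, ?_⟩
  rw [hsum2', ← mul_assoc, one_div, inv_mul_cancel₀ hδ0, one_mul]
end

section
/- Let q be a nonzero complex number, let \delta be a complex number with \delta^2 = 1 - 4q and \delta \neq 0, and set \tau = (1+\delta)/2, \sigma = (1-\delta)/2, \Delta = \delta, \mathbb{A} = (b - a\sigma)/\Delta, \mathbb{B} = (a\tau - b)/\Delta, where a, b are complex numbers. Then for all nonnegative integers r and s: \mathbb{A} \tau^r A_s(\tau) + \mathbb{B} \sigma^r A_s(\sigma) = (v_r/2) \sum_{t=0}^{s} A(s,t) w^*_t + (u_r/2) \sum_{t=0}^{s} A(s,t) (w^*_{t+1} - q w^*_{t-1}). -/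
theorem eulerian_poly_wstar_power_identity (a b q δ : ℂ) (hq : q ≠ 0)
    (hδ : δ ^ 2 = 1 - 4 * q) (hδ0 : δ ≠ 0)
    (w : ℤ → ℂ) (hw0 : w 0 = a) (hw1 : w 1 = b)
    (hw : ∀ j : ℤ, w j = w (j - 1) - q * w (j - 2))
    (u : ℤ → ℂ) (hu0 : u 0 = 0) (hu1 : u 1 = 1)
    (hu : ∀ j : ℤ, u j = u (j - 1) - q * u (j - 2))
    (v : ℤ → ℂ) (hv0 : v 0 = 2) (hv1 : v 1 = 1)
    (hv : ∀ j : ℤ, v j = v (j - 1) - q * v (j - 2)) :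
    ∀ r s : ℕ,
      ((b - a * ((1 - δ) / 2)) / δ) * ((1 + δ) / 2) ^ r * eulerianPolyC s ((1 + δ) / 2)
          + ((a * ((1 + δ) / 2) - b) / δ) * ((1 - δ) / 2) ^ r * eulerianPolyC s ((1 - δ) / 2) =
        (v r / 2) * (∑ t ∈ Finset.range (s + 1), (eulerianA s t : ℂ) * w t)
          + (u r / 2) * ∑ t ∈ Finset.range (s + 1), (eulerianA s t : ℂ) *
              (w ((t : ℤ) + 1) - q * w ((t : ℤ) - 1)) := by
  set τ : ℂ := (1 + δ) / 2 with hτ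
  set σ : ℂ := (1 - δ) / 2 with hσ
  have hts : τ * σ = q := by
    rw [hτ, hσ]; field_simp; linear_combination -hδ
  -- Binet formula for any solution of the recurrence, at nonnegative indices
  have binet : ∀ (f : ℤ → ℂ), (∀ j : ℤ, f j = f (j - 1) - q * f (j - 2)) →
      ∀ n : ℕ, f n = ((f 1 - f 0 * σ) / δ) * τ ^ n + ((f 0 * τ - f 1) / δ) * σ ^ n := by
    intro f hf
    have key : ∀ n : ℕ,
        (f n = ((f 1 - f 0 * σ) / δ) * τ ^ n + ((f 0 * τ - f 1) / δ) * σ ^ n) ∧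
        (f (n + 1) = ((f 1 - f 0 * σ) / δ) * τ ^ (n + 1)
            + ((f 0 * τ - f 1) / δ) * σ ^ (n + 1)) := by
      intro n
      induction n with
      | zero =>
        constructor
        · push_cast
          field_simp
          ring
        · push_cast
          field_simp
          ring
      | succ k ih =>
        refine ⟨by push_cast at ih ⊢; exact ih.2, ?_⟩
        have hrec := hf ((k : ℤ) + 2)
        have e1 : ((k : ℤ) + 2 - 1) = ((k : ℤ) + 1) := by ring
        have e2 : ((k : ℤ) + 2 - 2) = (k : ℤ) := by ring
        rw [e1, e2] at hrec
        have h0 := ih.1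
        have h1 := ih.2
        push_cast at h0 h1 ⊢
        have : ((k : ℤ) + 1 + 1) = ((k : ℤ) + 2) := by ring
        rw [this, hrec, h0, h1]
        have hq' : q = τ * σ := hts.symm
        rw [hq']
        ring
    exact fun n => (key n).1
  intro r s
  -- abbreviations
  set A : ℂ := (b - a * σ) / δ with hA
  set B : ℂ := (a * τ - b) / δ with hB
  have hwA : ∀ n : ℕ, w n = A * τ ^ n + B * σ ^ n := by
    intro n
    have := binet w hw n
    rw [hw0, hw1] at this
    rw [this, hA, hB]
  have huf : ∀ n : ℕ, u n = ((1 : ℂ) / δ) * τ ^ n + ((-1 : ℂ) / δ) * σ ^ n := by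
    intro n
    have := binet u hu n
    rw [hu0, hu1] at this
    rw [this]; ring_nf
  have hvf : ∀ n : ℕ, v n = τ ^ n + σ ^ n := by
    intro n
    have := binet v hv n
    rw [hv0, hv1] at this
    rw [this]
    have hτσ : τ - σ = δ := by rw [hτ, hσ]; ring
    field_simp
    linear_combination (τ ^ n + σ ^ n) * hτσ
  -- the two sums
  have h1 : (∑ t ∈ Finset.range (s + 1), (eulerianA s t : ℂ) * w t)
      = A * eulerianPolyC s τ + B * eulerianPolyC s σ := by
    rw [eulerianPolyC, eulerianPolyC, Finset.mul_sum, Finset.mul_sum,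
      ← Finset.sum_add_distrib]
    apply Finset.sum_congr rfl
    intro t _
    rw [hwA t]; ring
  have h2 : (∑ t ∈ Finset.range (s + 1), (eulerianA s t : ℂ) *
        (w ((t : ℤ) + 1) - q * w ((t : ℤ) - 1)))
      = δ * A * eulerianPolyC s τ - δ * B * eulerianPolyC s σ := by
    rw [eulerianPolyC, eulerianPolyC, Finset.mul_sum, Finset.mul_sum,
      ← Finset.sum_sub_distrib]
    apply Finset.sum_congr rfl
    intro t _
    have hrec := hw ((t : ℤ) + 1)
    have e1 : ((t : ℤ) + 1 - 1) = (t : ℤ) := by ring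
    have e2 : ((t : ℤ) + 1 - 2) = ((t : ℤ) - 1) := by ring
    rw [e1, e2] at hrec
    have key : w ((t : ℤ) + 1) - q * w ((t : ℤ) - 1) = 2 * w ((t : ℤ) + 1) - w t := by
      linear_combination -hrec
    have ht1 : w ((t : ℤ) + 1) = A * τ ^ (t + 1) + B * σ ^ (t + 1) := by
      have := hwA (t + 1); push_cast at this; exact this
    rw [key, ht1, hwA t]
    have h2τ : 2 * τ - 1 = δ := by rw [hτ]; ring
    have h2σ : 2 * σ - 1 = -δ := by rw [hσ]; ring
    have expand : 2 * (A * τ ^ (t + 1) + B * σ ^ (t + 1)) - (A * τ ^ t + B * σ ^ t)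
        = A * τ ^ t * (2 * τ - 1) + B * σ ^ t * (2 * σ - 1) := by ring
    rw [expand, h2τ, h2σ]
    ring
  rw [h1, h2, hvf r, huf r]
  field_simp
  ring
end

section
/- Let q be a nonzero complex number, let \delta be a complex number with \delta^2 = 1 - 4q, and set \tau = (1+\delta)/2, \sigma = (1-\delta)/2, \Delta = \delta. Then for all nonnegative integers j and s: \tau^s A_j(\tau) - \sigma^s A_j(\sigma) = \Delta \sum_{t=0}^{j} A(j,t) u_{t+s} and \tau^s A_j(\tau) + \sigma^s A_j(\sigma) = \sum_{t=0}^{j} A(j,t) v_{t+s}. -/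
theorem eulerian_poly_uv_identities (q δ : ℂ) (hq : q ≠ 0) (hδ : δ ^ 2 = 1 - 4 * q)
    (u : ℤ → ℂ) (hu0 : u 0 = 0) (hu1 : u 1 = 1)
    (hu : ∀ j : ℤ, u j = u (j - 1) - q * u (j - 2))
    (v : ℤ → ℂ) (hv0 : v 0 = 2) (hv1 : v 1 = 1)
    (hv : ∀ j : ℤ, v j = v (j - 1) - q * v (j - 2)) :
    ∀ j s : ℕ,
      ((1 + δ) / 2) ^ s * eulerianPolyC j ((1 + δ) / 2)
          - ((1 - δ) / 2) ^ s * eulerianPolyC j ((1 - δ) / 2) =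
        δ * ∑ t ∈ Finset.range (j + 1), (eulerianA j t : ℂ) * u (t + s) ∧
      ((1 + δ) / 2) ^ s * eulerianPolyC j ((1 + δ) / 2)
          + ((1 - δ) / 2) ^ s * eulerianPolyC j ((1 - δ) / 2) =
        ∑ t ∈ Finset.range (j + 1), (eulerianA j t : ℂ) * v (t + s) := by
  set τ : ℂ := (1 + δ) / 2 with hτdef
  set σ : ℂ := (1 - δ) / 2 with hσdef
  have hτ : τ ^ 2 = τ - q := by rw [hτdef]; linear_combination hδ / 4
  have hσ : σ ^ 2 = σ - q := by rw [hσdef]; linear_combination hδ / 4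
  have key : ∀ n : ℕ, δ * u n = τ ^ n - σ ^ n ∧ v n = τ ^ n + σ ^ n := by
    intro n
    induction n using Nat.strong_induction_on with
    | _ n ih =>
      match n with
      | 0 => simp [hu0, hv0]; ring
      | 1 =>
        constructor
        · simp only [Nat.cast_one, hu1, pow_one, mul_one, hτdef, hσdef]; ring
        · simp only [Nat.cast_one, hv1, pow_one, hτdef, hσdef]; ring
      | (m + 2) =>
        obtain ⟨ha1, hb1⟩ := ih (m + 1) (by omega)
        obtain ⟨ha0, hb0⟩ := ih m (by omega)
        push_cast at ha1 hb1 ha0 hb0 ⊢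
        have e1 : ((m : ℤ) + 2) - 1 = (m : ℤ) + 1 := by ring
        have e2 : ((m : ℤ) + 2) - 2 = (m : ℤ) := by ring
        have hru := hu ((m : ℤ) + 2); rw [e1, e2] at hru
        have hrv := hv ((m : ℤ) + 2); rw [e1, e2] at hrv
        constructor
        · linear_combination δ * hru + ha1 - q * ha0 - τ ^ m * hτ + σ ^ m * hσ
        · linear_combination hrv + hb1 - q * hb0 - τ ^ m * hτ - σ ^ m * hσ
  intro j s
  have hLτ : τ ^ s * eulerianPolyC j τ
      = ∑ t ∈ Finset.range (j + 1), (eulerianA j t : ℂ) * τ ^ (t + s) := by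
    rw [eulerianPolyC, Finset.mul_sum]
    exact Finset.sum_congr rfl fun t _ => by rw [pow_add]; ring
  have hLσ : σ ^ s * eulerianPolyC j σ
      = ∑ t ∈ Finset.range (j + 1), (eulerianA j t : ℂ) * σ ^ (t + s) := by
    rw [eulerianPolyC, Finset.mul_sum]
    exact Finset.sum_congr rfl fun t _ => by rw [pow_add]; ring
  constructor
  · rw [hLτ, hLσ, Finset.mul_sum, ← Finset.sum_sub_distrib]
    refine Finset.sum_congr rfl fun t _ => ?_
    have h := (key (t + s)).1
    push_cast at h
    linear_combination (-(eulerianA j t : ℂ)) * h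
  · rw [hLτ, hLσ, ← Finset.sum_add_distrib]
    refine Finset.sum_congr rfl fun t _ => ?_
    have h := (key (t + s)).2
    push_cast at h
    linear_combination (-(eulerianA j t : ℂ)) * h
end
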